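/- arXiv:1511.09470 — 6 statements merged into one kernel-verified Lean document; each statement's English description precedes it below -/
import Mathlib

section
/- Let f : ℝ → ℂ be a continuous odd function in the Wiener space and λ > 0. Then Z_λ f(x,γ) = 0 for all (x,γ) ∈ (1/2)ℤ² that do not lie in ℤ² + (1/2,1/2); in particular Z_λ f vanishes at (0,0), (1/2, 0), and (0, 1/2). -/
open MeasureTheory Complex Real FourierTransform

/-- The Zak transform `Z_λ f (x, γ) = √λ ∑_{k∈ℤ} f(λ(x+k)) e^{-2πikγ}`. -/
noncomputable def zak (lam : ℝ) (f : ℝ → ℂ) (x γ : ℝ) : ℂ :=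
  (Real.sqrt lam : ℂ) *
    ∑' k : ℤ, f (lam * (x + k)) * Complex.exp (-2 * Real.pi * Complex.I * k * γ)

/-- Membership in the Wiener space `W(ℝ)`:
`∑_{k∈ℤ} sup_{x∈[0,1]} |f(x+k)| < ∞`. -/
def InWiener (f : ℝ → ℂ) : Prop :=
  Summable (fun k : ℤ => ⨆ x : Set.Icc (0:ℝ) 1, ‖f ((x : ℝ) + k)‖)

theorem zak_odd_zero_at_half_lattice (f : ℝ → ℂ) (hf : Continuous f)
    (hodd : ∀ x, f (-x) = -f x) (hW : InWiener f) (lam : ℝ) (hlam : 0 < lam) :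
    ∀ m n : ℤ, ¬(Odd m ∧ Odd n) → zak lam f ((m : ℝ) / 2) ((n : ℝ) / 2) = 0 := by
  intro m n hmn
  have h2 : (2:ℤ) ∣ m * n := by
    rcases Int.even_or_odd m with hm | hm
    · exact (hm.mul_right n).two_dvd
    · rcases Int.even_or_odd n with hn | hn
      · exact (hn.mul_left m).two_dvd
      · exact absurd ⟨hm, hn⟩ hmn
  obtain ⟨c, hc⟩ := h2
  set g : ℤ → ℂ := fun k =>
    f (lam * ((m:ℝ)/2 + k)) * Complex.exp (-2 * Real.pi * Complex.I * k * (((n:ℝ)/2 : ℝ) : ℂ))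
    with hg
  have key : ∀ k : ℤ, g (-m - k) = - g k := by
    intro k
    have h1 : lam * ((m:ℝ)/2 + ((-m - k : ℤ):ℝ)) = -(lam * ((m:ℝ)/2 + (k:ℝ))) := by
      push_cast; ring
    have hcc : (m:ℂ) * n = 2 * c := by exact_mod_cast hc
    have h2 : Complex.exp (-2 * Real.pi * Complex.I * ((-m - k : ℤ):ℂ) * (((n:ℝ)/2 : ℝ) : ℂ))
        = Complex.exp (-2 * Real.pi * Complex.I * (k:ℂ) * (((n:ℝ)/2 : ℝ) : ℂ)) := by
      rw [show (-2 * Real.pi * Complex.I * ((-m - k : ℤ):ℂ) * (((n:ℝ)/2 : ℝ) : ℂ) : ℂ)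
          = -2 * Real.pi * Complex.I * (k:ℂ) * (((n:ℝ)/2 : ℝ) : ℂ)
            + ((c + n*k : ℤ):ℂ) * (2 * Real.pi * Complex.I) from by
            push_cast
            linear_combination (Real.pi * Complex.I) * hcc]
      rw [Complex.exp_add, Complex.exp_int_mul_two_pi_mul_I, mul_one]
    simp only [hg]
    rw [h1, hodd, h2]
    ring
  have hsum : ∑' k : ℤ, g k = 0 := by
    have h1 : ∑' k : ℤ, g k = ∑' k : ℤ, g ((Equiv.subLeft (-m)) k) :=
      ((Equiv.subLeft (-m)).tsum_eq g).symm
    have h2' : ∑' k : ℤ, g ((Equiv.subLeft (-m)) k) = - ∑' k : ℤ, g k := by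
      have hk : ∀ k : ℤ, g ((Equiv.subLeft (-m)) k) = - g k := fun k => by
        simpa using key k
      rw [tsum_congr hk, tsum_neg]
    linear_combination (h1.trans h2') / 2
  show (Real.sqrt lam : ℂ) * ∑' k : ℤ, g k = 0
  rw [hsum, mul_zero]
end

section
/- Let f : ℝ → ℂ be continuous with f and its Fourier transform f̂ both in the Wiener space, and let λ > 0. Then for all x, γ ∈ ℝ, Z_λ f(x,γ) = e^{2πixγ} Z_{1/λ} f̂(γ, −x), where both Zak transform series converge absolutely. -/
open MeasureTheory Complex Real FourierTransform

/-- Counting lemma: if `g n` is bounded by a window-sum of a summable nonneg `S`,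
and each index `j` lies in at most `N` windows, then `g` is summable. -/
lemma summable_of_windows {S : ℤ → ℝ} (hS : Summable S) (hS0 : ∀ j, 0 ≤ S j)
    {g : ℤ → ℝ} (hg0 : ∀ n, 0 ≤ g n) {F : ℤ → Finset ℤ}
    (hgF : ∀ n, g n ≤ ∑ j ∈ F n, S j) {N : ℕ}
    (hN : ∀ j : ℤ, ∃ v : Finset ℤ, v.card ≤ N ∧ ∀ n, j ∈ F n → n ∈ v) :
    Summable g := by
  apply summable_of_sum_le hg0 (c := N * ∑' j, S j)
  intro u
  calc ∑ n ∈ u, g n ≤ ∑ n ∈ u, ∑ j ∈ F n, S j := Finset.sum_le_sum fun n _ => hgF n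
    _ = ∑ p ∈ u.sigma (fun n => F n), S p.2 := by rw [Finset.sum_sigma]
    _ ≤ ↑N * ∑' j, S j := by
        rw [Finset.sum_comp S (fun p : (Σ _ : ℤ, ℤ) => p.2)]
        have step : ∀ j ∈ (u.sigma (fun n => F n)).image (fun p : (Σ _ : ℤ, ℤ) => p.2),
            ((u.sigma (fun n => F n)).filter (fun p : (Σ _ : ℤ, ℤ) => p.2 = j)).card • S j ≤ N * S j := by
          intro j hj
          rw [nsmul_eq_mul]
          refine mul_le_mul_of_nonneg_right ?_ (hS0 j)
          obtain ⟨v, hv, hvm⟩ := hN j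
          have hle : ((u.sigma (fun n => F n)).filter (fun p : (Σ _ : ℤ, ℤ) => p.2 = j)).card ≤ v.card := by
            apply Finset.card_le_card_of_injOn (fun p => p.1)
            · intro p hp
              simp only [Finset.mem_coe, Finset.mem_filter, Finset.mem_sigma] at hp
              exact hvm p.1 (hp.2 ▸ hp.1.2)
            · intro p hp q hq hpq
              simp only [Finset.mem_coe, Finset.mem_filter] at hp hq
              exact Sigma.ext hpq (by rw [show p.2 = j from hp.2, show q.2 = j from hq.2])
          exact_mod_cast hle.trans hv
        calc ∑ j ∈ (u.sigma (fun n => F n)).image (fun p : (Σ _ : ℤ, ℤ) => p.2),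
              ((u.sigma (fun n => F n)).filter (fun p : (Σ _ : ℤ, ℤ) => p.2 = j)).card • S j
            ≤ ∑ j ∈ (u.sigma (fun n => F n)).image (fun p : (Σ _ : ℤ, ℤ) => p.2), (N : ℝ) * S j :=
              Finset.sum_le_sum step
          _ = ↑N * ∑ j ∈ (u.sigma (fun n => F n)).image (fun p : (Σ _ : ℤ, ℤ) => p.2), S j := by
              rw [Finset.mul_sum]
          _ ≤ ↑N * ∑' j, S j :=
              mul_le_mul_of_nonneg_left (Summable.sum_le_tsum _ (fun j _ => hS0 j) hS) (Nat.cast_nonneg N)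

/-- Each unit-interval sup of a Wiener function is nonnegative. -/
lemma wiener_term_nonneg (f : ℝ → ℂ) (k : ℤ) :
    0 ≤ ⨆ x : Set.Icc (0:ℝ) 1, ‖f ((x : ℝ) + k)‖ :=
  Real.iSup_nonneg fun x => norm_nonneg _

lemma norm_le_wiener (f : ℝ → ℂ) (hf : Continuous f) (y : ℝ) :
    ‖f y‖ ≤ ⨆ x : Set.Icc (0:ℝ) 1, ‖f ((x : ℝ) + (⌊y⌋ : ℤ))‖ := by
  have hb : BddAbove (Set.range fun x : Set.Icc (0:ℝ) 1 => ‖f ((x : ℝ) + (⌊y⌋ : ℤ))‖) := by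
    have h1 : BddAbove ((fun t : ℝ => ‖f (t + (⌊y⌋ : ℤ))‖) '' Set.Icc 0 1) :=
      (isCompact_Icc.image ((hf.comp (by continuity)).norm)).bddAbove
    rwa [Set.image_eq_range] at h1
  have hy : y = Int.fract y + (⌊y⌋ : ℤ) := by rw [Int.fract]; push_cast; ring
  calc ‖f y‖ = ‖f ((Int.fract y : ℝ) + (⌊y⌋ : ℤ))‖ := by rw [← hy]
    _ ≤ _ := le_ciSup hb ⟨Int.fract y, ⟨Int.fract_nonneg y, (Int.fract_lt_one y).le⟩⟩

/-- Bound a value of `f` by a windowed sum of Wiener sups. -/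
lemma norm_le_window_sum (f : ℝ → ℂ) (hf : Continuous f) {c1 c2 y : ℝ}
    (h1 : c1 ≤ y) (h2 : y ≤ c2) :
    ‖f y‖ ≤ ∑ j ∈ Finset.Icc ⌊c1⌋ ⌊c2⌋, ⨆ x : Set.Icc (0:ℝ) 1, ‖f ((x : ℝ) + j)‖ := by
  refine (norm_le_wiener f hf y).trans ?_
  refine Finset.single_le_sum (fun j _ => wiener_term_nonneg f j) ?_
  exact Finset.mem_Icc.mpr ⟨Int.floor_mono h1, Int.floor_mono h2⟩

/-- Key summability lemma from the Wiener condition: functions dominated by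
window sups of `f` along an arithmetic progression with step `lam` are summable. -/
lemma wiener_summable (f : ℝ → ℂ) (hW : InWiener f)
    {lam : ℝ} (hlam : 0 < lam) (c1 c2 : ℝ) {g : ℤ → ℝ} (hg0 : ∀ n, 0 ≤ g n)
    (hg : ∀ n : ℤ, g n ≤ ∑ j ∈ Finset.Icc ⌊c1 + lam * n⌋ ⌊c2 + lam * n⌋,
      ⨆ x : Set.Icc (0:ℝ) 1, ‖f ((x : ℝ) + j)‖) :
    Summable g := by
  refine summable_of_windows hW (wiener_term_nonneg f) hg0 hg
    (N := ⌈(1 + c2 - c1) / lam⌉₊ + 1) (fun j => ?_)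
  refine ⟨Finset.Icc ⌈((j : ℝ) - c2) / lam⌉ ⌊((j : ℝ) + 1 - c1) / lam⌋, ?_, ?_⟩
  · rw [Int.card_Icc, Int.toNat_le]
    have h1 : (⌊((j : ℝ) + 1 - c1) / lam⌋ : ℝ) ≤ ((j : ℝ) + 1 - c1) / lam := Int.floor_le _
    have h2 : ((j : ℝ) - c2) / lam ≤ (⌈((j : ℝ) - c2) / lam⌉ : ℝ) := Int.le_ceil _
    have h3 : (1 + c2 - c1) / lam ≤ (⌈(1 + c2 - c1) / lam⌉₊ : ℝ) := Nat.le_ceil _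
    have heq : ((j : ℝ) + 1 - c1) / lam - ((j : ℝ) - c2) / lam = (1 + c2 - c1) / lam := by
      field_simp
      ring
    have key : ((⌊((j : ℝ) + 1 - c1) / lam⌋ + 1 - ⌈((j : ℝ) - c2) / lam⌉ : ℤ) : ℝ)
        ≤ ((⌈(1 + c2 - c1) / lam⌉₊ + 1 : ℕ) : ℝ) := by push_cast; linarith
    exact_mod_cast key
  · intro n hn
    rw [Finset.mem_Icc] at hn
    have hA : c1 + lam * (n : ℝ) < (j : ℝ) + 1 := by
      have h1 := Int.lt_floor_add_one (c1 + lam * (n : ℝ))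
      have h2 : ((⌊c1 + lam * (n : ℝ)⌋ : ℤ) : ℝ) ≤ (j : ℝ) := by exact_mod_cast hn.1
      linarith
    have hB : (j : ℝ) ≤ c2 + lam * (n : ℝ) := by
      have h2 : ((j : ℤ) : ℝ) ≤ ((⌊c2 + lam * (n : ℝ)⌋ : ℤ) : ℝ) := by exact_mod_cast hn.2
      exact h2.trans (Int.floor_le _)
    rw [Finset.mem_Icc]
    constructor
    · rw [Int.ceil_le, div_le_iff₀ hlam]
      linarith
    · rw [Int.le_floor, le_div_iff₀ hlam]
      linarith

lemma wiener_bdd (f : ℝ → ℂ) (hf : Continuous f) (k : ℤ) :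
    BddAbove (Set.range fun x : Set.Icc (0:ℝ) 1 => ‖f ((x : ℝ) + k)‖) := by
  have h1 : BddAbove ((fun t : ℝ => ‖f (t + (k : ℤ))‖) '' Set.Icc 0 1) :=
    (isCompact_Icc.image ((hf.comp (by continuity)).norm)).bddAbove
  rwa [Set.image_eq_range] at h1

lemma wiener_summable_point (f : ℝ → ℂ) (hf : Continuous f) (hW : InWiener f)
    {lam : ℝ} (hlam : 0 < lam) (x : ℝ) :
    Summable fun n : ℤ => ‖f (lam * (x + n))‖ := by
  refine wiener_summable f hW hlam (lam * x) (lam * x) (fun n => norm_nonneg _) (fun n => ?_)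
  exact norm_le_window_sum f hf (le_of_eq (by ring)) (le_of_eq (by ring))

lemma wiener_integrable (f : ℝ → ℂ) (hf : Continuous f) (hW : InWiener f) :
    Integrable f := by
  refine Real.integrable_of_summable_norm_Icc (f := ⟨f, hf⟩) ?_
  refine Summable.of_nonneg_of_le (fun n => norm_nonneg _) (fun n => ?_) hW
  rw [ContinuousMap.norm_le _ (wiener_term_nonneg f n)]
  rintro ⟨y, hy⟩
  exact le_ciSup (wiener_bdd f hf n) ⟨y, hy⟩

lemma fourier_mod_scale (f : ℝ → ℂ) {lam : ℝ} (hlam : 0 < lam) (γ ξ : ℝ) :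
    𝓕 (fun t : ℝ => f (lam * t) * Complex.exp (-2 * Real.pi * Complex.I * t * γ)) ξ
      = (1 / lam : ℝ) * 𝓕 f ((ξ + γ) / lam) := by
  rw [Real.fourier_real_eq_integral_exp_smul,
    Real.fourier_real_eq_integral_exp_smul]
  have key : ∀ t : ℝ, Complex.exp (↑(-2 * Real.pi * t * ξ) * Complex.I) •
      (f (lam * t) * Complex.exp (-2 * Real.pi * Complex.I * t * γ))
      = (fun u : ℝ => Complex.exp (↑(-2 * Real.pi * u * ((ξ + γ) / lam)) * Complex.I) • f u)
        (lam * t) := by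
    intro t
    simp only [smul_eq_mul]
    have harr : Complex.exp (↑(-2 * Real.pi * t * ξ) * Complex.I) *
        (f (lam * t) * Complex.exp (-2 * ↑Real.pi * Complex.I * ↑t * ↑γ))
        = f (lam * t) * (Complex.exp (↑(-2 * Real.pi * t * ξ) * Complex.I) *
          Complex.exp (-2 * ↑Real.pi * Complex.I * ↑t * ↑γ)) := by ring
    have hexp : (↑(-2 * Real.pi * t * ξ) * Complex.I + -2 * ↑Real.pi * Complex.I * ↑t * ↑γ)
        = (↑(-2 * Real.pi * (lam * t) * ((ξ + γ) / lam)) : ℂ) * Complex.I := by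
      push_cast
      field_simp [Complex.ofReal_ne_zero.mpr hlam.ne']
      ring
    rw [harr, ← Complex.exp_add, hexp, mul_comm]
  simp_rw [key]
  rw [MeasureTheory.Measure.integral_comp_mul_left
    (fun u : ℝ => Complex.exp (↑(-2 * Real.pi * u * ((ξ + γ) / lam)) * Complex.I) • f u) lam]
  rw [abs_of_pos (inv_pos.mpr hlam)]
  simp [Complex.real_smul, Complex.ofReal_inv, one_div]

lemma norm_exp_real_mul_I (a : ℝ) : ‖Complex.exp ((a : ℝ) * Complex.I)‖ = 1 := by
  rw [Complex.norm_exp_ofReal_mul_I]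

lemma norm_exp_neg_two_pi (k t : ℝ) :
    ‖Complex.exp (-2 * Real.pi * Complex.I * k * t)‖ = 1 := by
  have : (-2 * Real.pi * Complex.I * k * t : ℂ) = ((-2 * Real.pi * k * t : ℝ) : ℂ) * Complex.I := by
    push_cast; ring
  rw [this, norm_exp_real_mul_I]

lemma norm_exp_neg_two_pi_int (k : ℤ) (t : ℝ) :
    ‖Complex.exp (-2 * Real.pi * Complex.I * (k : ℂ) * (t : ℝ))‖ = 1 := by
  rw [show ((k : ℤ) : ℂ) = (((k : ℝ) : ℝ) : ℂ) by push_cast; ring]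
  exact norm_exp_neg_two_pi k t

theorem zak_fourier (f : ℝ → ℂ) (hf : Continuous f) (hW : InWiener f)
    (hWhat : InWiener (𝓕 f)) (lam : ℝ) (hlam : 0 < lam) :
    ∀ x γ : ℝ,
      Summable (fun k : ℤ => ‖f (lam * (x + k)) * Complex.exp (-2 * Real.pi * Complex.I * k * γ)‖) ∧
      Summable (fun k : ℤ =>
        ‖(𝓕 f) ((1 / lam) * (γ + k)) * Complex.exp (-2 * Real.pi * Complex.I * k * (-x))‖) ∧
      zak lam f x γ = Complex.exp (2 * Real.pi * Complex.I * x * γ) * zak (1 / lam) (𝓕 f) γ (-x) := by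
  intro x γ
  have hFc : Continuous (𝓕 f) :=
    VectorFourier.fourierIntegral_continuous Real.continuous_fourierChar
      (by exact continuous_inner) (wiener_integrable f hf hW)
  have hs1 : Summable (fun k : ℤ =>
      ‖f (lam * (x + k)) * Complex.exp (-2 * Real.pi * Complex.I * k * γ)‖) := by
    simp only [norm_mul, norm_exp_neg_two_pi_int, mul_one]
    exact wiener_summable_point f hf hW hlam x
  have hs2 : Summable (fun k : ℤ =>
      ‖(𝓕 f) ((1 / lam) * (γ + k)) * Complex.exp (-2 * Real.pi * Complex.I * k * (-x))‖) := by
    simp only [norm_mul, ← Complex.ofReal_neg, norm_exp_neg_two_pi_int, mul_one]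
    exact wiener_summable_point (𝓕 f) hFc hWhat (one_div_pos.mpr hlam) γ
  refine ⟨hs1, hs2, ?_⟩
  -- the modulated dilate of `f`
  have hgc : Continuous (fun t : ℝ => f (lam * t) * Complex.exp (-2 * Real.pi * Complex.I * t * γ)) := by
    apply Continuous.mul
    · exact hf.comp (continuous_const.mul continuous_id)
    · exact Complex.continuous_exp.comp (by continuity)
  set g : C(ℝ, ℂ) :=
    ⟨fun t : ℝ => f (lam * t) * Complex.exp (-2 * Real.pi * Complex.I * t * γ), hgc⟩ with hgdef
  have hFg : ∀ ξ : ℝ, 𝓕 (⇑g) ξ = ((1 / lam : ℝ) : ℂ) * 𝓕 f ((ξ + γ) / lam) := fun ξ =>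
    fourier_mod_scale f hlam γ ξ
  have h_norm : ∀ K : TopologicalSpace.Compacts ℝ,
      Summable fun n : ℤ => ‖(g.comp (ContinuousMap.addRight (n : ℤ))).restrict K‖ := by
    intro K
    obtain ⟨r, hr⟩ := K.isCompact.isBounded.subset_closedBall 0
    rw [Real.closedBall_eq_Icc, zero_sub, zero_add] at hr
    refine wiener_summable f hW hlam (-(lam * r)) (lam * r) (fun n => norm_nonneg _)
      (fun n => ?_)
    rw [ContinuousMap.norm_le _ (Finset.sum_nonneg (fun j _ => wiener_term_nonneg f j))]
    rintro ⟨y, hy⟩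
    have hy' := hr hy
    have hval : ((g.comp (ContinuousMap.addRight ((n : ℤ) : ℝ))).restrict K) ⟨y, hy⟩
        = f (lam * (y + n)) * Complex.exp (-2 * Real.pi * Complex.I * ((y + n : ℝ) : ℂ) * γ) :=
      rfl
    rw [hval, norm_mul]
    have h1 : ‖Complex.exp (-2 * Real.pi * Complex.I * ((y + n : ℝ) : ℂ) * γ)‖ = 1 :=
      norm_exp_neg_two_pi (y + n) γ
    rw [h1, mul_one]
    have hb1 : -(lam * r) + lam * n ≤ lam * (y + n) := by nlinarith [hy'.1]
    have hb2 : lam * (y + n) ≤ lam * r + lam * n := by nlinarith [hy'.2]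
    exact norm_le_window_sum f hf hb1 hb2
  have h_sum : Summable fun n : ℤ => 𝓕 (⇑g) n := by
    simp only [hFg]
    apply Summable.mul_left
    apply Summable.of_norm
    have hbase := wiener_summable_point (𝓕 f) hFc hWhat (one_div_pos.mpr hlam) γ
    convert hbase using 3 with n
    · rfl
    ring
  have PSF := Real.tsum_eq_tsum_fourier h_norm h_sum x
  -- rewrite both sides of PSF
  have hL : (fun n : ℤ => g (x + n)) = fun n : ℤ =>
      Complex.exp (-2 * Real.pi * Complex.I * x * γ) *
        (f (lam * (x + n)) * Complex.exp (-2 * Real.pi * Complex.I * n * γ)) := by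
    funext n
    have hval : g (x + n) = f (lam * (x + n)) *
        Complex.exp (-2 * Real.pi * Complex.I * ((x + (n : ℝ) : ℝ) : ℂ) * γ) := rfl
    rw [hval]
    have he : Complex.exp (-2 * Real.pi * Complex.I * ((x + (n : ℝ) : ℝ) : ℂ) * γ)
        = Complex.exp (-2 * Real.pi * Complex.I * x * γ) *
          Complex.exp (-2 * Real.pi * Complex.I * n * γ) := by
      rw [← Complex.exp_add]
      congr 1
      push_cast
      ring
    rw [he]
    ring
  have hR : (fun n : ℤ => 𝓕 (⇑g) n * fourier n (x : UnitAddCircle)) = fun n : ℤ =>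
      ((1 / lam : ℝ) : ℂ) * ((𝓕 f) ((1 / lam) * (γ + n)) *
        Complex.exp (-2 * Real.pi * Complex.I * n * (-x : ℝ))) := by
    funext n
    rw [hFg n, fourier_coe_apply]
    have harg : (((n : ℤ) : ℝ) + γ) / lam = (1 / lam) * (γ + n) := by push_cast; ring
    have hexp : Complex.exp (2 * Real.pi * Complex.I * n * x / ((1 : ℝ) : ℂ))
        = Complex.exp (-2 * Real.pi * Complex.I * n * ((-x : ℝ) : ℂ)) := by
      congr 1
      push_cast
      ring
    rw [harg, hexp]
    ring
  rw [hL, hR, tsum_mul_left, tsum_mul_left] at PSF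
  -- scalar bookkeeping
  have h0 : Complex.exp (2 * Real.pi * Complex.I * x * γ) *
      Complex.exp (-2 * Real.pi * Complex.I * x * γ) = 1 := by
    rw [← Complex.exp_add, show (2 * Real.pi * Complex.I * x * γ) +
      (-2 * Real.pi * Complex.I * x * γ) = 0 by ring, Complex.exp_zero]
  have hsqrt : ((Real.sqrt (1 / lam) : ℝ) : ℂ) = (Real.sqrt lam : ℂ) * ((1 / lam : ℝ) : ℂ) := by
    have h2 : Real.sqrt lam ≠ 0 := (Real.sqrt_pos.mpr hlam).ne'
    have hre : Real.sqrt (1 / lam) = Real.sqrt lam * (1 / lam) := by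
      rw [one_div, Real.sqrt_inv]
      field_simp
      rw [Real.sq_sqrt hlam.le]
    rw [hre]
    push_cast
    ring
  simp only [zak]
  set T1 := ∑' k : ℤ, f (lam * (x + k)) * Complex.exp (-2 * Real.pi * Complex.I * k * γ)
    with hT1def
  set T2 := ∑' k : ℤ, 𝓕 f (1 / lam * (γ + k)) *
      Complex.exp (-2 * Real.pi * Complex.I * k * ((-x : ℝ) : ℂ)) with hT2def
  have hT1 : T1 = Complex.exp (2 * Real.pi * Complex.I * x * γ) * (((1 / lam : ℝ) : ℂ) * T2) := by
    rw [← PSF, ← mul_assoc, h0, one_mul]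
  rw [hT1, hsqrt]
  ring
end

section
/- Let g : ℝ → ℂ be a continuous function in the Wiener space whose Fourier transform satisfies ĝ = −g (i.e., g is an eigenfunction of the Fourier transform with eigenvalue −1; such g is automatically even). Then ∑_{k∈ℤ} (−1)^k g(√2·(k + 1/4)) = 0. -/
open MeasureTheory Complex Real FourierTransform

section Aux

variable (g : ℝ → ℂ)

/-- Wiener sup terms. -/
noncomputable def wS (k : ℤ) : ℝ := ⨆ x : Set.Icc (0:ℝ) 1, ‖g ((x : ℝ) + k)‖

lemma wS_nonneg (k : ℤ) : 0 ≤ wS g k :=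
  Real.iSup_nonneg fun _ => norm_nonneg _

variable {g} (hg : Continuous g)

include hg in
lemma norm_le_wS {t : ℝ} {k : ℤ} (h1 : (k : ℝ) ≤ t) (h2 : t ≤ k + 1) : ‖g t‖ ≤ wS g k := by
  have hb : BddAbove (Set.range fun x : Set.Icc (0:ℝ) 1 => ‖g ((x : ℝ) + k)‖) :=
    (isCompact_range (by fun_prop)).bddAbove
  have : t - k ∈ Set.Icc (0:ℝ) 1 := ⟨by linarith, by linarith⟩
  have := le_ciSup hb (⟨t - k, this⟩ : Set.Icc (0:ℝ) 1)
  simpa [wS] using this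

end Aux

section Aux2

variable {g : ℝ → ℂ} (hg : Continuous g)
  (hW : Summable (fun k : ℤ => ⨆ x : Set.Icc (0:ℝ) 1, ‖g ((x : ℝ) + k)‖))

include hW in
lemma summable_wS : Summable (wS g) := by unfold wS; exact hW

include hW in
lemma summable_wS_comp {m : ℤ → ℤ} (hm : StrictMono m) (j : ℤ) :
    Summable fun n : ℤ => wS g (m n + j) := by
  have h0 : Summable (wS g) := summable_wS hW
  have h1 : Summable fun k : ℤ => wS g (k + j) :=
    ((Equiv.addRight j).summable_iff (f := wS g)).mpr h0
  exact h1.comp_injective hm.injective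

/-- floor of √2 n -/
noncomputable def fl (n : ℤ) : ℤ := ⌊Real.sqrt 2 * n⌋

lemma one_le_sqrt_two : (1:ℝ) ≤ Real.sqrt 2 := by
  rw [show (1:ℝ) = Real.sqrt 1 by simp]
  exact Real.sqrt_le_sqrt (by norm_num)

lemma sqrt_two_le_two : Real.sqrt 2 ≤ 2 := by
  nlinarith [Real.sq_sqrt (show (0:ℝ) ≤ 2 by norm_num), Real.sqrt_nonneg 2]

lemma fl_strictMono : StrictMono fl := by
  apply strictMono_int_of_lt_succ
  intro n
  have key : Real.sqrt 2 * n + 1 ≤ Real.sqrt 2 * ((n:ℝ) + 1) := by nlinarith [one_le_sqrt_two]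
  have h3 : fl n + 1 ≤ fl (n+1) := by
    unfold fl
    rw [← Int.floor_add_one]
    apply Int.floor_le_floor
    push_cast
    linarith
  omega

include hW in
lemma summable_bound (D : ℕ) :
    Summable fun n : ℤ => ∑ j ∈ Finset.Icc (-(D:ℤ)) (D:ℤ), wS g (fl n + j) := by
  apply summable_sum
  intro j _
  exact summable_wS_comp hW fl_strictMono j

include hg in
lemma norm_g_le_bound {n : ℤ} {D : ℕ} {t : ℝ}
    (h1 : (fl n : ℝ) - D ≤ t) (h2 : t ≤ (fl n : ℝ) + D) :
    ‖g t‖ ≤ ∑ j ∈ Finset.Icc (-(D:ℤ)) (D:ℤ), wS g (fl n + j) := by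
  have hk1 : (⌊t⌋ : ℝ) ≤ t := Int.floor_le t
  have hk2 : t ≤ ⌊t⌋ + 1 := (Int.lt_floor_add_one t).le
  have hlow : fl n - D ≤ ⌊t⌋ := Int.le_floor.mpr (by push_cast; linarith)
  have hhigh : ⌊t⌋ ≤ fl n + D := by
    rw [← Int.floor_intCast (R := ℝ) (fl n + D)]
    exact Int.floor_le_floor (by push_cast; linarith)
  have hmem : ⌊t⌋ - fl n ∈ Finset.Icc (-(D:ℤ)) (D:ℤ) := by
    simp only [Finset.mem_Icc]; omega
  have hs : wS g (fl n + (⌊t⌋ - fl n)) ≤ ∑ j ∈ Finset.Icc (-(D:ℤ)) (D:ℤ), wS g (fl n + j) :=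
    Finset.single_le_sum (f := fun j => wS g (fl n + j)) (fun j _ => wS_nonneg g (fl n + j)) hmem
  rw [show fl n + (⌊t⌋ - fl n) = ⌊t⌋ by omega] at hs
  exact le_trans (norm_le_wS hg hk1 hk2) hs

end Aux2

section Aux3

variable {g : ℝ → ℂ} (hg : Continuous g)
  (hW : Summable (fun k : ℤ => ⨆ x : Set.Icc (0:ℝ) 1, ‖g ((x : ℝ) + k)‖))

include hg hW in
lemma integrable_of_wiener : Integrable g := by
  have : Summable fun n : ℤ =>
      ‖((⟨g, hg⟩ : C(ℝ, ℂ)).comp <| ContinuousMap.addRight (n:ℝ)).restrict (Set.Icc 0 1)‖ := by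
    apply Summable.of_nonneg_of_le (fun n => norm_nonneg _) _ (summable_wS hW)
    intro n
    apply (ContinuousMap.norm_le _ (wS_nonneg g n)).mpr
    intro x
    show ‖g ((x:ℝ) + n)‖ ≤ wS g n
    exact norm_le_wS hg (by have := x.2.1; simp at this ⊢; linarith)
      (by have := x.2.2; simp at this ⊢; linarith)
  exact Real.integrable_of_summable_norm_Icc this

include hg hW in
lemma g_even (heig : ∀ γ : ℝ, 𝓕 g γ = -g γ) (x : ℝ) : g (-x) = g x := by
  have hInt : Integrable g := integrable_of_wiener hg hW
  have hF : 𝓕 g = fun y => -g y := funext heig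
  have hInt2 : Integrable (𝓕 g) := by rw [hF]; exact hInt.neg
  have hinv := hg.fourierInv_fourier_eq hInt hInt2
  have h1 : 𝓕⁻ (𝓕 g) x = g x := congrFun hinv x
  rw [fourierInv_eq_fourier_neg] at h1
  have h2 : 𝓕 (fun y => -g y) (-x) = -(𝓕 g (-x)) := by
    simp [Real.fourier_real_eq_integral_exp_smul, smul_neg, integral_neg]
  rw [hF, h2, heig, neg_neg] at h1
  exact h1

end Aux3

section Aux4

variable (g : ℝ → ℂ)

/-- The function to which we apply Poisson summation. -/
noncomputable def hfun : ℝ → ℂ := fun t =>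
  g (Real.sqrt 2 * t + Real.sqrt 2 / 4) * Complex.exp ((-(π * t) : ℝ) * Complex.I)

lemma sqrt2_mul_self : Real.sqrt 2 * Real.sqrt 2 = 2 := Real.mul_self_sqrt (by norm_num)

lemma sqrt2_pos : (0:ℝ) < Real.sqrt 2 := Real.sqrt_pos.mpr (by norm_num)

lemma sqrt2_mul_self_c : (Real.sqrt 2 : ℂ) * (Real.sqrt 2 : ℂ) = 2 := by
  exact_mod_cast sqrt2_mul_self

lemma sqrt2_ne_zero_c : (Real.sqrt 2 : ℂ) ≠ 0 := by
  exact_mod_cast (ne_of_gt sqrt2_pos)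

variable {g} (heig : ∀ γ : ℝ, 𝓕 g γ = -g γ)

include heig in
lemma fourier_hfun (ξ : ℝ) :
    𝓕 (hfun g) ξ = (Real.sqrt 2 : ℂ)⁻¹ *
      (Complex.exp ((π * (ξ + 1/2) / 2 : ℝ) * Complex.I) *
        (- g ((ξ + 1/2) / Real.sqrt 2))) := by
  set s := Real.sqrt 2
  have hs : (s:ℂ) * s = 2 := sqrt2_mul_self_c
  have hs0 : (s:ℂ) ≠ 0 := sqrt2_ne_zero_c
  set F : ℝ → ℂ := fun u => g (u + s / 4) * Complex.exp ((-(s * π * u * (ξ + 1/2)) : ℝ) * Complex.I)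
    with hF
  set G : ℝ → ℂ := fun u => g u * Complex.exp ((-(s * π * (u - s / 4) * (ξ + 1/2)) : ℝ) * Complex.I)
    with hG
  have step1 : 𝓕 (hfun g) ξ = ∫ t : ℝ, F (s * t) := by
    rw [Real.fourier_real_eq_integral_exp_smul]
    congr 1
    ext t
    simp only [hfun, hF, smul_eq_mul]
    rw [mul_comm (Complex.exp _) _, mul_assoc, ← Complex.exp_add]
    congr 2
    push_cast
    linear_combination ((π:ℂ) * t * (ξ + 1/2) * Complex.I) * hs
  have step2 : (∫ t : ℝ, F (s * t)) = |s⁻¹| • ∫ u : ℝ, F u :=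
    MeasureTheory.Measure.integral_comp_mul_left F s
  have step3 : (∫ u : ℝ, F u) = ∫ u : ℝ, G (u + s / 4) := by
    congr 1
    ext u
    simp only [hF, hG, add_sub_cancel_right]
  have step4 : (∫ u : ℝ, G (u + s / 4)) = ∫ u : ℝ, G u :=
    MeasureTheory.integral_add_right_eq_self G (s / 4)
  have step5 : (∫ u : ℝ, G u) = Complex.exp ((π * (ξ + 1/2) / 2 : ℝ) * Complex.I) *
      ∫ u : ℝ, Complex.exp ((-2 * π * u * ((ξ + 1/2) / s) : ℝ) * Complex.I) • g u := by
    rw [← MeasureTheory.integral_const_mul]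
    congr 1
    ext u
    simp only [hG, smul_eq_mul]
    rw [show Complex.exp ((π * (ξ + 1/2) / 2 : ℝ) * Complex.I) *
        (Complex.exp ((-2 * π * u * ((ξ + 1/2) / s) : ℝ) * Complex.I) * g u)
        = g u * (Complex.exp ((π * (ξ + 1/2) / 2 : ℝ) * Complex.I) *
          Complex.exp ((-2 * π * u * ((ξ + 1/2) / s) : ℝ) * Complex.I)) by ring,
      ← Complex.exp_add]
    congr 2
    have hinv : ((s:ℂ))⁻¹ = (s:ℂ)/2 := by
      field_simp
      linear_combination -hs
    push_cast
    rw [div_eq_mul_inv ((ξ:ℂ) + 1/2), hinv]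
    linear_combination ((π:ℂ)/4 * (ξ+1/2) * Complex.I) * hs
  have step6 : (∫ u : ℝ, Complex.exp ((-2 * π * u * ((ξ + 1/2) / s) : ℝ) * Complex.I) • g u)
      = - g ((ξ + 1/2) / s) := by
    rw [← Real.fourier_real_eq_integral_exp_smul]
    exact heig _
  rw [step1, step2, step3, step4, step5, step6]
  rw [_root_.abs_of_nonneg (by positivity : (0:ℝ) ≤ s⁻¹)]
  rw [Complex.real_smul]
  push_cast
  ring

end Aux4

section Aux5

/-- Even integers equiv. -/
def evenEquiv : ℤ ≃ {n : ℤ | Even n} where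
  toFun k := ⟨2*k, ⟨k, by ring⟩⟩
  invFun n := n.1 / 2
  left_inv k := by simp
  right_inv n := by
    apply Subtype.ext
    obtain ⟨m, hm⟩ := n.2
    show 2 * ((n : ℤ) / 2) = (n : ℤ)
    omega

def oddEquiv : ℤ ≃ ↥({n : ℤ | Even n}ᶜ) where
  toFun k := ⟨2*k+1, by
    simp only [Set.mem_compl_iff, Set.mem_setOf_eq, Int.even_iff]
    omega⟩
  invFun n := n.1 / 2
  left_inv k := by simp [Int.add_mul_ediv_left]; omega
  right_inv n := by
    apply Subtype.ext
    have := n.2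
    simp only [Set.mem_compl_iff, Set.mem_setOf_eq, Int.even_iff] at this
    show 2 * ((n : ℤ) / 2) + 1 = (n : ℤ)
    omega

lemma evenEquiv_apply (k : ℤ) : ((evenEquiv k : ℤ)) = 2 * k := rfl
lemma oddEquiv_apply (k : ℤ) : ((oddEquiv k : ℤ)) = 2 * k + 1 := rfl

variable {g : ℝ → ℂ} (hg : Continuous g)
  (hW : Summable (fun k : ℤ => ⨆ x : Set.Icc (0:ℝ) 1, ‖g ((x : ℝ) + k)‖))

include hg hW in
lemma summable_half_lattice : Summable fun n : ℤ => ‖g (((n : ℝ) + 1/2) / Real.sqrt 2)‖ := by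
  have s2 := sqrt2_mul_self
  have spos := sqrt2_pos
  have sle2 := sqrt_two_le_two
  have s1 := one_le_sqrt_two
  apply Summable.add_compl (s := {n : ℤ | Even n})
  · rw [← Equiv.summable_iff evenEquiv]
    apply Summable.of_nonneg_of_le (fun k => norm_nonneg _) _ (summable_bound hW 3)
    intro k
    show ‖g ((((2*k : ℤ) : ℝ) + 1/2) / Real.sqrt 2)‖ ≤ _
    have e1 : (((2*k : ℤ) : ℝ) + 1/2) / Real.sqrt 2 = Real.sqrt 2 * k + Real.sqrt 2/4 := by
      rw [div_eq_iff (ne_of_gt spos)]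
      push_cast
      linear_combination (-(k:ℝ) - 1/4) * s2
    rw [e1]
    have hfl1 : (fl k : ℝ) ≤ Real.sqrt 2 * k := Int.floor_le _
    have hfl2 : Real.sqrt 2 * k < fl k + 1 := Int.lt_floor_add_one _
    apply norm_g_le_bound hg (by push_cast; nlinarith) (by push_cast; nlinarith)
  · rw [← Equiv.summable_iff oddEquiv]
    apply Summable.of_nonneg_of_le (fun k => norm_nonneg _) _ (summable_bound hW 3)
    intro k
    show ‖g ((((2*k+1 : ℤ) : ℝ) + 1/2) / Real.sqrt 2)‖ ≤ _
    have e1 : (((2*k+1 : ℤ) : ℝ) + 1/2) / Real.sqrt 2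
        = Real.sqrt 2 * k + 3 * Real.sqrt 2/4 := by
      rw [div_eq_iff (ne_of_gt spos)]
      push_cast
      linear_combination (-(k:ℝ) - 3/4) * s2
    rw [e1]
    have hfl1 : (fl k : ℝ) ≤ Real.sqrt 2 * k := Int.floor_le _
    have hfl2 : Real.sqrt 2 * k < fl k + 1 := Int.lt_floor_add_one _
    apply norm_g_le_bound hg (by push_cast; nlinarith) (by push_cast; nlinarith)

end Aux5

section Main

variable {g : ℝ → ℂ} (hg : Continuous g)
  (hW : Summable (fun k : ℤ => ⨆ x : Set.Icc (0:ℝ) 1, ‖g ((x : ℝ) + k)‖))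
  (heig : ∀ γ : ℝ, 𝓕 g γ = -g γ)

include hg in
lemma hfun_continuous : Continuous (hfun g) := by
  unfold hfun
  fun_prop

lemma norm_hfun (t : ℝ) : ‖hfun g t‖ = ‖g (Real.sqrt 2 * t + Real.sqrt 2/4)‖ := by
  simp [hfun, Complex.norm_exp]

include hg hW in
lemma poisson_h_norm (K : TopologicalSpace.Compacts ℝ) :
    Summable fun n : ℤ =>
      ‖((⟨hfun g, hfun_continuous hg⟩ : C(ℝ, ℂ)).comp
          (ContinuousMap.addRight (n:ℝ))).restrict K‖ := by
  have s2 := sqrt2_mul_self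
  have spos := sqrt2_pos
  have sle2 := sqrt_two_le_two
  obtain ⟨r, hr⟩ := K.isCompact.isBounded.subset_closedBall 0
  set R : ℝ := max r 0 with hR
  have hrR : (K : Set ℝ) ⊆ Metric.closedBall 0 R :=
    hr.trans (Metric.closedBall_subset_closedBall (le_max_left _ _))
  set D : ℕ := ⌈Real.sqrt 2 * R + 2⌉₊ with hDdef
  have hD : Real.sqrt 2 * R + 2 ≤ D := Nat.le_ceil _
  apply Summable.of_nonneg_of_le (fun n => norm_nonneg _) _ (summable_bound hW D)
  intro n
  apply (ContinuousMap.norm_le _ (Finset.sum_nonneg fun j _ => wS_nonneg g _)).mpr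
  intro x
  show ‖hfun g ((x:ℝ) + n)‖ ≤ _
  rw [norm_hfun]
  have hx : |(x:ℝ)| ≤ R := by
    have := hrR x.2
    rwa [Metric.mem_closedBall, Real.dist_eq, sub_zero] at this
  rw [abs_le] at hx
  have hfl1 : (fl n : ℝ) ≤ Real.sqrt 2 * n := Int.floor_le _
  have hfl2 : Real.sqrt 2 * n < fl n + 1 := Int.lt_floor_add_one _
  have hR0 : 0 ≤ R := le_max_right _ _
  apply norm_g_le_bound hg (by push_cast; nlinarith) (by push_cast; nlinarith)

include hg hW heig in
lemma poisson_h_sum : Summable fun n : ℤ => 𝓕 (hfun g) n := by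
  apply Summable.of_norm
  apply Summable.of_nonneg_of_le (fun n => norm_nonneg _) _ (summable_half_lattice hg hW)
  intro n
  rw [fourier_hfun heig]
  rw [norm_mul, norm_mul, norm_neg]
  have h1 : ‖((Real.sqrt 2 : ℝ) : ℂ)⁻¹‖ ≤ 1 := by
    rw [norm_inv, Complex.norm_real, Real.norm_eq_abs,
      _root_.abs_of_nonneg sqrt2_pos.le]
    rw [inv_le_one_iff₀]
    right
    exact one_le_sqrt_two
  have h2 : ‖Complex.exp ((π * ((n:ℝ) + 1/2) / 2 : ℝ) * Complex.I)‖ = 1 := by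
    simp [Complex.norm_exp]
  rw [h2, one_mul]
  calc ‖((Real.sqrt 2 : ℝ) : ℂ)⁻¹‖ * ‖g (((n:ℝ) + 1/2) / Real.sqrt 2)‖
      ≤ 1 * ‖g (((n:ℝ) + 1/2) / Real.sqrt 2)‖ := by
        exact mul_le_mul_of_nonneg_right h1 (norm_nonneg _)
    _ = _ := one_mul _

end Main

section Final

variable {g : ℝ → ℂ} (hg : Continuous g)
  (hW : Summable (fun k : ℤ => ⨆ x : Set.Icc (0:ℝ) 1, ‖g ((x : ℝ) + k)‖))
  (heig : ∀ γ : ℝ, 𝓕 g γ = -g γ)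

lemma neg_one_zpow_aux (k : ℤ) : ((-1:ℂ))^(-k-1) = -(-1:ℂ)^k := by
  have h0 : ((-1:ℂ)) ≠ 0 := by norm_num
  have hsq : ((-1:ℂ)^k)⁻¹ = (-1:ℂ)^k := by
    apply inv_eq_of_mul_eq_one_right
    rw [← zpow_add₀ h0, show k + k = 2*k by ring, zpow_mul]
    norm_num
  rw [show -k-1 = -(k+1) by ring, zpow_neg, zpow_add₀ h0, zpow_one, mul_inv, hsq,
    show ((-1:ℂ))⁻¹ = -1 by norm_num]
  ring

lemma exp_pi_div_four_sub : Complex.exp ((π/4 : ℝ) * Complex.I)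
    - Complex.exp ((3*π/4 : ℝ) * Complex.I) = (Real.sqrt 2 : ℂ) := by
  rw [Complex.exp_mul_I, Complex.exp_mul_I]
  rw [← Complex.ofReal_cos, ← Complex.ofReal_sin, ← Complex.ofReal_cos, ← Complex.ofReal_sin]
  rw [show (3*π/4 : ℝ) = π - π/4 by ring, Real.cos_pi_sub, Real.sin_pi_sub]
  rw [Real.cos_pi_div_four]
  push_cast
  ring

include hg hW heig in
theorem main_result :
    ∑' k : ℤ, (-1 : ℂ) ^ k * g (Real.sqrt 2 * ((k : ℝ) + 1/4)) = 0 := by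
  have s2 := sqrt2_mul_self
  have spos := sqrt2_pos
  have hs0 : (Real.sqrt 2 : ℂ) ≠ 0 := sqrt2_ne_zero_c
  set F : ℤ → ℂ := fun k => (-1 : ℂ) ^ k * g (Real.sqrt 2 * ((k : ℝ) + 1/4)) with hF
  set S : ℂ := ∑' k : ℤ, F k with hS
  show S = 0
  set c : ℤ → ℂ := fun n => 𝓕 (hfun g) n with hc
  -- Poisson summation
  have poisson := Real.tsum_eq_tsum_fourier
    (f := ⟨hfun g, hfun_continuous hg⟩) (poisson_h_norm hg hW)
    (poisson_h_sum hg hW heig) 0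
  have hLHS : ∑' n : ℤ, (⟨hfun g, hfun_continuous hg⟩ : C(ℝ, ℂ)) ((0:ℝ) + n) = S := by
    apply tsum_congr
    intro n
    show hfun g ((0:ℝ) + n) = F n
    unfold hfun
    have harg : Real.sqrt 2 * ((0:ℝ) + n) + Real.sqrt 2/4
        = Real.sqrt 2 * ((n:ℝ) + 1/4) := by ring
    have hexp : Complex.exp (((-(π * ((0:ℝ) + n)) : ℝ) : ℂ) * Complex.I) = (-1:ℂ)^n := by
      rw [show (((-(π * ((0:ℝ) + n)) : ℝ) : ℂ) * Complex.I) = n * (-(↑π * Complex.I)) by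
        push_cast; ring]
      rw [Complex.exp_int_mul, Complex.exp_neg, Complex.exp_pi_mul_I]
      norm_num
    rw [harg, hexp, hF, mul_comm]
  have hRHS : ∑' n : ℤ, 𝓕 (⇑(⟨hfun g, hfun_continuous hg⟩ : C(ℝ, ℂ))) n
      * fourier n ((0:ℝ) : UnitAddCircle) = ∑' n : ℤ, c n := by
    apply tsum_congr
    intro n
    have : ((0:ℝ) : UnitAddCircle) = 0 := by norm_num
    rw [this, fourier_eval_zero, mul_one]
    rfl
  rw [hLHS, hRHS] at poisson
  -- split into even and odd parts
  have hcsum : Summable c := poisson_h_sum hg hW heig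
  have hsplit : ∑' n : ℤ, c n
      = (∑' x : {n : ℤ | Even n}, c x) + ∑' x : ↥({n : ℤ | Even n}ᶜ), c x :=
    ((hcsum.subtype _).hasSum.add_compl (hcsum.subtype _).hasSum).tsum_eq
  -- even part
  have hEven : (∑' x : {n : ℤ | Even n}, c x)
      = (-(Real.sqrt 2 : ℂ)⁻¹ * Complex.exp ((π/4:ℝ) * Complex.I)) * S := by
    rw [← Equiv.tsum_eq evenEquiv (fun x : {n : ℤ | Even n} => c x)]
    rw [hS, ← tsum_mul_left]
    apply tsum_congr
    intro k
    show c (2*k) = _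
    rw [hc]
    show 𝓕 (hfun g) ((2*k : ℤ) : ℝ) = _
    rw [fourier_hfun heig]
    have harg : (((2*k:ℤ):ℝ) + 1/2)/Real.sqrt 2 = Real.sqrt 2 * ((k:ℝ) + 1/4) := by
      rw [div_eq_iff (ne_of_gt spos)]
      push_cast
      linear_combination (-(k:ℝ) - 1/4) * s2
    have hexp : Complex.exp (((π * (((2*k:ℤ):ℝ) + 1/2) / 2 : ℝ) : ℂ) * Complex.I)
        = (-1:ℂ)^k * Complex.exp (((π/4 : ℝ) : ℂ) * Complex.I) := by
      rw [show (((π * (((2*k:ℤ):ℝ) + 1/2) / 2 : ℝ) : ℂ) * Complex.I)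
          = k * (↑π * Complex.I) + ((π/4 : ℝ) : ℂ) * Complex.I by push_cast; ring]
      rw [Complex.exp_add, Complex.exp_int_mul, Complex.exp_pi_mul_I]
    rw [harg, hexp, hF]
    ring
  -- odd part
  have hOdd : (∑' x : ↥({n : ℤ | Even n}ᶜ), c x)
      = (-(Real.sqrt 2 : ℂ)⁻¹ * Complex.exp ((3*π/4:ℝ) * Complex.I)) * (-S) := by
    rw [← Equiv.tsum_eq oddEquiv (fun x : ↥({n : ℤ | Even n}ᶜ) => c x)]
    have hterm : ∀ k : ℤ, c (2*k+1)
        = (-(Real.sqrt 2 : ℂ)⁻¹ * Complex.exp ((3*π/4:ℝ) * Complex.I)) * (- F (-k-1)) := by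
      intro k
      rw [hc]
      show 𝓕 (hfun g) ((2*k+1 : ℤ) : ℝ) = _
      rw [fourier_hfun heig]
      have harg : (((2*k+1:ℤ):ℝ) + 1/2)/Real.sqrt 2 = Real.sqrt 2 * ((k:ℝ) + 3/4) := by
        rw [div_eq_iff (ne_of_gt spos)]
        push_cast
        linear_combination (-(k:ℝ) - 3/4) * s2
      have hgev : g (Real.sqrt 2 * ((k:ℝ) + 3/4))
          = g (Real.sqrt 2 * (((-k-1 : ℤ):ℝ) + 1/4)) := by
        rw [show Real.sqrt 2 * (((-k-1 : ℤ):ℝ) + 1/4)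
            = -(Real.sqrt 2 * ((k:ℝ) + 3/4)) by push_cast; ring]
        exact (g_even hg hW heig _).symm
      have hexp : Complex.exp (((π * (((2*k+1:ℤ):ℝ) + 1/2) / 2 : ℝ) : ℂ) * Complex.I)
          = (-1:ℂ)^k * Complex.exp (((3*π/4 : ℝ) : ℂ) * Complex.I) := by
        rw [show (((π * (((2*k+1:ℤ):ℝ) + 1/2) / 2 : ℝ) : ℂ) * Complex.I)
            = k * (↑π * Complex.I) + ((3*π/4 : ℝ) : ℂ) * Complex.I by push_cast; ring]
        rw [Complex.exp_add, Complex.exp_int_mul, Complex.exp_pi_mul_I]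
      rw [harg, hgev, hexp]
      simp only [hF, neg_one_zpow_aux]
      ring
    calc ∑' k : ℤ, c (oddEquiv k)
        = ∑' k : ℤ, (-(Real.sqrt 2 : ℂ)⁻¹ * Complex.exp ((3*π/4:ℝ) * Complex.I))
            * (- F (-k-1)) := by
          apply tsum_congr
          intro k
          exact hterm k
      _ = (-(Real.sqrt 2 : ℂ)⁻¹ * Complex.exp ((3*π/4:ℝ) * Complex.I))
            * ∑' k : ℤ, - F (-k-1) := tsum_mul_left
      _ = _ := by
        congr 1
        rw [tsum_neg, hS]
        congr 1
        exact Equiv.tsum_eq ⟨fun k => -k-1, fun k => -k-1, fun k => by ring, fun k => by ring⟩ F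
  -- combine
  rw [hsplit, hEven, hOdd] at poisson
  have hcoef : (-(Real.sqrt 2 : ℂ)⁻¹ * Complex.exp ((π/4:ℝ) * Complex.I))
      + (-(Real.sqrt 2 : ℂ)⁻¹ * Complex.exp ((3*π/4:ℝ) * Complex.I)) * (-1) = -1 := by
    have h1 := exp_pi_div_four_sub
    have h2 : (Real.sqrt 2 : ℂ)⁻¹ * (Real.sqrt 2 : ℂ) = 1 := inv_mul_cancel₀ hs0
    linear_combination (-(Real.sqrt 2:ℂ)⁻¹) * h1 - h2
  have h2S : (2:ℂ) * S = 0 := by linear_combination poisson + S * hcoef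
  have := mul_eq_zero.mp h2S
  rcases this with h | h
  · norm_num at h
  · exact h

end Final


theorem sum_eigen_neg_one_quarter (g : ℝ → ℂ) (hg : Continuous g) (hW : InWiener g)
    (heig : ∀ γ : ℝ, 𝓕 g γ = -g γ) :
    ∑' k : ℤ, (-1 : ℂ) ^ k * g (Real.sqrt 2 * ((k : ℝ) + 1/4)) = 0 :=
  main_result hg hW heig
end

section
/- Let g : ℝ → ℂ be a continuous Wiener-space function with ĝ = −g. Then ∑_{k∈ℤ} (−1)^k g(√2·(k + 3/4)) = 0. -/
open MeasureTheory Complex Real FourierTransform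

namespace SumEigenAux

/-- The Wiener weights. -/
noncomputable def w (g : ℝ → ℂ) (k : ℤ) : ℝ := ⨆ x : Set.Icc (0:ℝ) 1, ‖g ((x : ℝ) + k)‖

lemma w_nonneg (g : ℝ → ℂ) (k : ℤ) : 0 ≤ w g k :=
  Real.iSup_nonneg fun _ => norm_nonneg _

lemma norm_le_w {g : ℝ → ℂ} (hg : Continuous g) (u : ℝ) : ‖g u‖ ≤ w g ⌊u⌋ := by
  have hb : BddAbove (Set.range fun x : Set.Icc (0:ℝ) 1 => ‖g ((x : ℝ) + (⌊u⌋ : ℝ))‖) := by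
    have hcont : Continuous fun x : ℝ => ‖g (x + (⌊u⌋ : ℝ))‖ :=
      (hg.comp (continuous_id.add continuous_const)).norm
    have hc := (isCompact_Icc (a := (0:ℝ)) (b := 1)).image hcont
    rw [Set.image_eq_range] at hc
    exact hc.bddAbove
  have hx : (u - (⌊u⌋ : ℝ)) ∈ Set.Icc (0:ℝ) 1 :=
    ⟨sub_nonneg.2 (Int.floor_le u), by linarith [Int.lt_floor_add_one u]⟩
  have := le_ciSup hb (⟨u - (⌊u⌋ : ℝ), hx⟩ : Set.Icc (0:ℝ) 1)
  simpa [w] using this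

/-- The comparison sums. -/
noncomputable def B (g : ℝ → ℂ) (M : ℕ) (n : ℤ) : ℝ :=
  ∑ j ∈ Finset.range (4*M+8), w g (⌊Real.sqrt 2 * n⌋ - (2*(M:ℤ)+4) + j)

lemma B_nonneg (g : ℝ → ℂ) (M : ℕ) (n : ℤ) : 0 ≤ B g M n :=
  Finset.sum_nonneg fun _ _ => w_nonneg g _

lemma B_summable {g : ℝ → ℂ} (hW : InWiener g) (M : ℕ) : Summable (B g M) := by
  have hW' : Summable (w g) := hW
  apply summable_sum
  intro j _
  have hmono : StrictMono fun n : ℤ => ⌊Real.sqrt 2 * n⌋ - (2*(M:ℤ)+4) + (j : ℤ) := by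
    apply strictMono_int_of_lt_succ
    intro n
    have h1 : Real.sqrt 2 * n + 1 ≤ Real.sqrt 2 * (n + 1) := by
      have : (1:ℝ) ≤ Real.sqrt 2 := by
        rw [show (1:ℝ) = Real.sqrt 1 by simp]
        exact Real.sqrt_le_sqrt (by norm_num)
      nlinarith
    have h2 : ⌊Real.sqrt 2 * n⌋ + 1 ≤ ⌊Real.sqrt 2 * ((n:ℤ) + 1 : ℤ)⌋ := by
      rw [show (⌊Real.sqrt 2 * n⌋ + 1 : ℤ) = ⌊Real.sqrt 2 * n + (1:ℤ)⌋ by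
        rw [Int.floor_add_intCast]]
      apply Int.floor_le_floor
      push_cast
      push_cast at h1
      linarith
    omega
  exact hW'.comp_injective hmono.injective

lemma norm_g_le_B {g : ℝ → ℂ} (hg : Continuous g) (M : ℕ) (n : ℤ) (u : ℝ)
    (hu : |u - Real.sqrt 2 * n| ≤ 2*(M:ℝ)+2) : ‖g u‖ ≤ B g M n := by
  have habs := abs_le.1 hu
  set p : ℤ := ⌊Real.sqrt 2 * n⌋ - (2*(M:ℤ)+4) with hp
  have h1 : p ≤ ⌊u⌋ := by
    rw [Int.le_floor]
    have hfl := Int.floor_le (Real.sqrt 2 * n)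
    have : ((p : ℤ) : ℝ) = (⌊Real.sqrt 2 * n⌋ : ℝ) - (2*(M:ℝ)+4) := by
      rw [hp]; push_cast; ring
    rw [this]
    linarith [habs.1]
  have h2 : ⌊u⌋ < p + (4*(M:ℤ)+8) := by
    have h3 : (⌊u⌋ : ℝ) ≤ u := Int.floor_le u
    have h4 := Int.lt_floor_add_one (Real.sqrt 2 * n)
    have : (⌊u⌋ : ℝ) < ((p + (4*(M:ℤ)+8) : ℤ) : ℝ) := by
      rw [hp]; push_cast; linarith [habs.2]
    exact_mod_cast this
  have hj : (⌊u⌋ - p).toNat ∈ Finset.range (4*M+8) := by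
    rw [Finset.mem_range]; omega
  have hje : p + ((⌊u⌋ - p).toNat : ℤ) = ⌊u⌋ := by omega
  calc ‖g u‖ ≤ w g ⌊u⌋ := norm_le_w hg u
    _ = w g (p + ((⌊u⌋ - p).toNat : ℤ)) := by rw [hje]
    _ ≤ B g M n := by
        rw [B, ← hp]
        exact Finset.single_le_sum (f := fun j : ℕ => w g (p + (j:ℤ)))
          (fun i _ => w_nonneg g _) hj

/-- `(-1)^(a+2b) = (-1)^a` for integer powers in `ℂ`. -/
lemma negpow (a b : ℤ) : (-1:ℂ)^(a + 2*b) = (-1:ℂ)^a := by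
  rw [zpow_add₀ (by norm_num : (-1:ℂ) ≠ 0), Even.neg_one_zpow (even_two_mul b), mul_one]

lemma epow (k : ℤ) : Complex.exp ((π * (k:ℝ) : ℝ) * I) = (-1:ℂ)^k := by
  rw [show ((π * (k:ℝ) : ℝ) * I : ℂ) = (k:ℂ) * ((π:ℂ) * I) by push_cast; ring,
    Complex.exp_int_mul, Complex.exp_pi_mul_I]

end SumEigenAux

open SumEigenAux

set_option maxHeartbeats 1600000 in
theorem sum_eigen_neg_one_three_quarter (g : ℝ → ℂ) (hg : Continuous g) (hW : InWiener g)
    (heig : ∀ γ : ℝ, 𝓕 g γ = -g γ) :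
    ∑' k : ℤ, (-1 : ℂ) ^ k * g (Real.sqrt 2 * ((k : ℝ) + 3/4)) = 0 := by
  have hs : (0:ℝ) < Real.sqrt 2 := Real.sqrt_pos.2 (by norm_num)
  have hs2 : Real.sqrt 2 * Real.sqrt 2 = 2 := Real.mul_self_sqrt (by norm_num)
  have hsle : Real.sqrt 2 ≤ 3/2 := by nlinarith
  -- the auxiliary function
  set h : ℝ → ℂ := fun t => Complex.exp ((π * t : ℝ) * I) * g (Real.sqrt 2 * (t + 3/4)) with hh
  have hcont : Continuous h := by
    apply Continuous.mul
    · exact Complex.continuous_exp.comp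
        ((Complex.continuous_ofReal.comp (continuous_const.mul continuous_id)).mul
          continuous_const)
    · exact hg.comp (continuous_const.mul (continuous_id.add continuous_const))
  have hnorm : ∀ t : ℝ, ‖h t‖ = ‖g (Real.sqrt 2 * (t + 3/4))‖ := by
    intro t
    rw [hh]
    simp only []
    rw [norm_mul, Complex.norm_exp_ofReal_mul_I, one_mul]
  -- integrability of g
  have gInt : Integrable g := by
    apply Real.integrable_of_summable_norm_Icc (f := ⟨g, hg⟩)
    have key : ∀ n : ℤ, ‖((ContinuousMap.mk g hg).comp
        (ContinuousMap.addRight (n:ℝ))).restrict (Set.Icc (0:ℝ) 1)‖ = w g n := by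
      intro n
      rw [ContinuousMap.norm_eq_iSup_norm]
      rfl
    simp only [key]
    exact hW
  -- g is even
  have hFg : 𝓕 g = fun γ => -g γ := funext heig
  have gFInt : Integrable (𝓕 g) := by rw [hFg]; exact gInt.neg
  have hinv := hg.fourierInv_fourier_eq gInt gFInt
  have geven : ∀ x : ℝ, g (-x) = g x := by
    intro x
    have h1 : g x = 𝓕⁻ (𝓕 g) x := by rw [hinv]
    rw [Real.fourierInv_eq_fourier_neg] at h1
    rw [hFg] at h1
    have h2 : 𝓕 (fun γ : ℝ => -g γ) (-x) = -𝓕 g (-x) := by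
      simp only [Real.fourier_real_eq, smul_neg]
      rw [integral_neg]
    rw [h2, heig, neg_neg] at h1
    exact h1.symm
  -- Fourier transform of h
  have hF : ∀ γ : ℝ, 𝓕 h γ = (Real.sqrt 2 : ℂ)⁻¹ *
      (Complex.exp ((2*π*(γ - 1/2)*(3/4) : ℝ) * I) * -g ((γ - 1/2)/Real.sqrt 2)) := by
    intro γ
    set s : ℝ := Real.sqrt 2 with hsdef
    set c : ℝ := 3 * s / 4 with hc
    set β : ℝ := (γ - 1/2) / s with hβ
    set F : ℝ → ℂ := fun u => Complex.exp ((-2 * π * ((u - c)/s) * (γ - 1/2) : ℝ) * I) * g u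
      with hFdef
    have hQ : ∀ v : ℝ, Complex.exp ((-2 * π * v * γ : ℝ) * I) • h v = F (s * v + c) := by
      intro v
      have harg : Real.sqrt 2 * (v + 3/4) = s * v + c := by rw [hc]; ring
      have hdiv : (s * v + c - c)/s = v := by
        field_simp
        ring
      have hexp : ((-2 * π * v * γ : ℝ) * I) + ((π * v : ℝ) * I)
          = ((-2 * π * ((s*v + c - c)/s) * (γ - 1/2) : ℝ) * I) := by
        rw [hdiv]; push_cast; ring
      rw [hFdef]
      simp only [smul_eq_mul, hh]
      rw [harg, ← mul_assoc, ← Complex.exp_add, hexp]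
    calc 𝓕 h γ = ∫ v : ℝ, Complex.exp ((-2 * π * v * γ : ℝ) * I) • h v :=
          Real.fourier_real_eq_integral_exp_smul h γ
      _ = ∫ v : ℝ, F (s * v + c) := integral_congr_ae (Filter.Eventually.of_forall hQ)
      _ = |s⁻¹| • ∫ u : ℝ, F u := by
          rw [show (fun v : ℝ => F (s * v + c)) = fun v : ℝ => (fun x => F (x + c)) (s * v) from
            rfl]
          rw [Measure.integral_comp_mul_left (fun x => F (x + c)) s]
          rw [integral_add_right_eq_self F c]
      _ = |s⁻¹| • ∫ u : ℝ, Complex.exp ((2*π*(γ - 1/2)*(3/4) : ℝ) * I) •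
            (Complex.exp ((-2 * π * u * β : ℝ) * I) • g u) := by
          refine congrArg (fun z => |s⁻¹| • z) (integral_congr_ae (Filter.Eventually.of_forall
            fun u => ?_))
          have hreal : (-2 * π * ((u - c)/s) * (γ - 1/2) : ℝ)
              = (2*π*(γ - 1/2)*(3/4) : ℝ) + (-2 * π * u * β : ℝ) := by
            rw [hc, hβ]
            field_simp
            ring
          rw [hFdef]
          simp only [smul_eq_mul]
          rw [← mul_assoc, ← Complex.exp_add, hreal]
          push_cast
          ring_nf
      _ = |s⁻¹| • (Complex.exp ((2*π*(γ - 1/2)*(3/4) : ℝ) * I) •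
            ∫ u : ℝ, Complex.exp ((-2 * π * u * β : ℝ) * I) • g u) := by
          rw [integral_smul]
      _ = (Real.sqrt 2 : ℂ)⁻¹ *
            (Complex.exp ((2*π*(γ - 1/2)*(3/4) : ℝ) * I) * -g ((γ - 1/2)/Real.sqrt 2)) := by
          have hfou : (∫ u : ℝ, Complex.exp ((-2 * π * u * β : ℝ) * I) • g u) = 𝓕 g β :=
            (Real.fourier_real_eq_integral_exp_smul g β).symm
          rw [hfou, heig β, abs_of_pos (inv_pos.2 hs)]
          rw [Complex.real_smul, smul_eq_mul, hβ, hsdef]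
          push_cast
          ring
  -- summability of the main series
  have hterm_le : ∀ k : ℤ, ‖(-1:ℂ)^k * g (Real.sqrt 2 * ((k:ℝ) + 3/4))‖ ≤ B g 1 k := by
    intro k
    rw [norm_mul, norm_zpow, norm_neg, norm_one, one_zpow, one_mul]
    apply norm_g_le_B hg
    rw [show Real.sqrt 2 * ((k:ℝ)+3/4) - Real.sqrt 2 * k = Real.sqrt 2 * (3/4) by ring]
    have h34 : |Real.sqrt 2 * (3/4)| = Real.sqrt 2 * (3/4) := abs_of_nonneg (by positivity)
    rw [h34]
    push_cast
    nlinarith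
  have hterm_summ : Summable (fun k : ℤ => (-1:ℂ)^k * g (Real.sqrt 2 * ((k:ℝ) + 3/4))) := by
    apply Summable.of_norm
    exact Summable.of_nonneg_of_le (fun k => norm_nonneg _) hterm_le (B_summable hW 1)
  set S := ∑' k : ℤ, (-1 : ℂ) ^ k * g (Real.sqrt 2 * ((k : ℝ) + 3/4)) with hSdef
  have hsum : HasSum (fun k : ℤ => (-1:ℂ)^k * g (Real.sqrt 2 * ((k:ℝ) + 3/4))) S :=
    hterm_summ.hasSum
  set c1 : ℂ := (Real.sqrt 2 : ℂ)⁻¹ * Complex.exp ((-3*π/4 : ℝ) * I) with hc1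
  set c2 : ℂ := (Real.sqrt 2 : ℂ)⁻¹ * Complex.exp ((3*π/4 : ℝ) * I) with hc2
  -- even part
  have keyE : ∀ m : ℤ, 𝓕 h (((2*m : ℤ)) : ℝ)
      = c1 * ((-1:ℂ)^(m-1) * g (Real.sqrt 2 * (((m-1 : ℤ) : ℝ) + 3/4))) := by
    intro m
    rw [hF]
    have e1 : ((((2*m : ℤ)) : ℝ) - 1/2)/Real.sqrt 2
        = Real.sqrt 2 * (((m-1 : ℤ) : ℝ) + 3/4) := by
      rw [div_eq_iff hs.ne']
      push_cast
      linear_combination (1/4 - (m:ℝ)) * hs2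
    have e2 : Complex.exp ((2*π*((((2*m : ℤ)) : ℝ) - 1/2)*(3/4) : ℝ) * I)
        = (-1:ℂ)^m * Complex.exp ((-3*π/4 : ℝ) * I) := by
      rw [show ((2*π*((((2*m : ℤ)) : ℝ) - 1/2)*(3/4) : ℝ) * I : ℂ)
          = ((π * ((m + 2*m : ℤ) : ℝ) : ℝ) * I) + ((-3*π/4 : ℝ) * I) by push_cast; ring,
        Complex.exp_add, epow, negpow]
    rw [e1, e2]
    have e3 : (-1:ℂ)^(m-1) = -(-1:ℂ)^m := by
      rw [zpow_sub₀ (by norm_num : (-1:ℂ) ≠ 0), zpow_one]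
      ring
    rw [hc1, e3]
    ring
  have hE : HasSum (fun m : ℤ => 𝓕 h (((2*m : ℤ)) : ℝ)) (c1 * S) := by
    have h1 : HasSum (fun m : ℤ =>
        (-1:ℂ)^(m-1) * g (Real.sqrt 2 * (((m-1 : ℤ) : ℝ) + 3/4))) S :=
      (Equiv.subRight (1:ℤ)).hasSum_iff.2 hsum
    have h2 := h1.mul_left c1
    simpa only [keyE] using h2
  -- odd part
  have keyO : ∀ m : ℤ, 𝓕 h (((2*m+1 : ℤ)) : ℝ)
      = c2 * ((-1:ℂ)^((-1:ℤ)-m) * g (Real.sqrt 2 * ((((-1:ℤ)-m : ℤ) : ℝ) + 3/4))) := by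
    intro m
    rw [hF]
    have e1 : ((((2*m+1 : ℤ)) : ℝ) - 1/2)/Real.sqrt 2 = Real.sqrt 2 * ((m:ℝ) + 1/4) := by
      rw [div_eq_iff hs.ne']
      push_cast
      linear_combination (-(1/4) - (m:ℝ)) * hs2
    have e4 : g (Real.sqrt 2 * ((((-1:ℤ)-m : ℤ) : ℝ) + 3/4)) = g (Real.sqrt 2 * ((m:ℝ) + 1/4)) := by
      rw [show Real.sqrt 2 * ((((-1:ℤ)-m : ℤ) : ℝ) + 3/4) = -(Real.sqrt 2 * ((m:ℝ) + 1/4)) by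
        push_cast; ring]
      exact geven _
    have e2 : Complex.exp ((2*π*((((2*m+1 : ℤ)) : ℝ) - 1/2)*(3/4) : ℝ) * I)
        = (-1:ℂ)^m * Complex.exp ((3*π/4 : ℝ) * I) := by
      rw [show ((2*π*((((2*m+1 : ℤ)) : ℝ) - 1/2)*(3/4) : ℝ) * I : ℂ)
          = ((π * ((m + 2*m : ℤ) : ℝ) : ℝ) * I) + ((3*π/4 : ℝ) * I) by push_cast; ring,
        Complex.exp_add, epow, negpow]
    have e3 : (-1:ℂ)^((-1:ℤ)-m) = -(-1:ℂ)^m := by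
      have := negpow ((-1:ℤ)-m) (m+1)
      rw [show ((-1:ℤ)-m + 2*(m+1)) = m+1 by ring] at this
      rw [← this, zpow_add₀ (by norm_num : (-1:ℂ) ≠ 0), zpow_one]
      ring
    rw [e1, e2, e4, e3, hc2]
    ring
  have hO : HasSum (fun m : ℤ => 𝓕 h (((2*m+1 : ℤ)) : ℝ)) (c2 * S) := by
    have h1 : HasSum (fun m : ℤ =>
        (-1:ℂ)^((-1:ℤ)-m) * g (Real.sqrt 2 * ((((-1:ℤ)-m : ℤ) : ℝ) + 3/4))) S :=
      (Equiv.subLeft (-1:ℤ)).hasSum_iff.2 hsum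
    have h2 := h1.mul_left c2
    simpa only [keyO] using h2
  -- combine to a HasSum over all integers
  have htot : HasSum (fun n : ℤ => 𝓕 h (n:ℝ)) (c1 * S + c2 * S) := by
    have hinj1 : Function.Injective (fun m : ℤ => 2*m) := fun a b hab => by
      simpa using hab
    have hinj2 : Function.Injective (fun m : ℤ => 2*m+1) := fun a b hab => by
      simp only at hab; omega
    set Fe : ℤ → ℂ := fun n => if Even n then 𝓕 h (n:ℝ) else 0 with hFe
    set Fo : ℤ → ℂ := fun n => if Even n then 0 else 𝓕 h (n:ℝ) with hFo
    have hFeS : HasSum Fe (c1 * S) := by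
      have hvan : ∀ x ∉ Set.range (fun m : ℤ => 2*m), Fe x = 0 := by
        intro x hx
        rw [hFe]
        simp only
        rw [if_neg]
        intro ⟨r, hr⟩
        exact hx ⟨r, show 2*r = x by omega⟩
      rw [← Function.Injective.hasSum_iff hinj1 hvan]
      have hcomp : (Fe ∘ fun m : ℤ => 2*m) = fun m : ℤ => 𝓕 h (((2*m : ℤ)) : ℝ) := by
        funext m
        simp only [Function.comp_apply, hFe]
        rw [if_pos ⟨m, (two_mul m)⟩]
      rw [hcomp]
      exact hE
    have hFoS : HasSum Fo (c2 * S) := by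
      have hvan : ∀ x ∉ Set.range (fun m : ℤ => 2*m+1), Fo x = 0 := by
        intro x hx
        rw [hFo]
        simp only
        rw [if_pos]
        rcases Int.even_or_odd x with he | ho
        · exact he
        · obtain ⟨r, hr⟩ := ho
          exact absurd (⟨r, show 2*r+1 = x by omega⟩ : x ∈ Set.range fun m : ℤ => 2*m+1) hx
      rw [← Function.Injective.hasSum_iff hinj2 hvan]
      have hcomp : (Fo ∘ fun m : ℤ => 2*m+1) = fun m : ℤ => 𝓕 h (((2*m+1 : ℤ)) : ℝ) := by
        funext m
        simp only [Function.comp_apply, hFo]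
        rw [if_neg (by rintro ⟨r, hr⟩; omega)]
      rw [hcomp]
      exact hO
    have hadd := hFeS.add hFoS
    have hsplit : (fun n : ℤ => Fe n + Fo n) = fun n : ℤ => 𝓕 h (n:ℝ) := by
      funext n
      by_cases hn : Even n <;> simp [hFe, hFo, hn]
    rwa [hsplit] at hadd
  -- Poisson summation hypothesis on compacts
  have h_norm : ∀ K : TopologicalSpace.Compacts ℝ, Summable fun n : ℤ =>
      ‖((ContinuousMap.mk h hcont).comp (ContinuousMap.addRight (n:ℝ))).restrict K‖ := by
    intro K
    obtain ⟨r, hr⟩ := K.isCompact.isBounded.subset_closedBall 0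
    set M : ℕ := ⌈r⌉₊ with hM
    have hKM : (K : Set ℝ) ⊆ Set.Icc (-(M:ℝ)) M := by
      intro x hx
      have := hr hx
      rw [Metric.mem_closedBall, Real.dist_eq, sub_zero] at this
      have hrM : r ≤ (M:ℝ) := Nat.le_ceil r
      have := abs_le.1 this
      exact ⟨by linarith, by linarith⟩
    refine Summable.of_nonneg_of_le (fun n => norm_nonneg _) (fun n => ?_) (B_summable hW M)
    rw [ContinuousMap.norm_le _ (B_nonneg g M n)]
    rintro ⟨x, hx⟩
    simp only [ContinuousMap.restrict_apply, ContinuousMap.comp_apply,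
      ContinuousMap.coe_addRight, ContinuousMap.coe_mk]
    rw [hnorm]
    apply norm_g_le_B hg
    obtain ⟨hx1, hx2⟩ := hKM hx
    rw [show Real.sqrt 2 * ((x + (n:ℝ)) + 3/4) - Real.sqrt 2 * n
      = Real.sqrt 2 * x + Real.sqrt 2 * (3/4) by ring]
    rw [abs_le]
    constructor
    · nlinarith [mul_le_mul_of_nonneg_left hx1 hs.le, hs.le]
    · nlinarith [mul_le_mul_of_nonneg_left hx2 hs.le, hs.le]
  -- Poisson summation
  have hP := Real.tsum_eq_tsum_fourier (f := ContinuousMap.mk h hcont)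
    h_norm htot.summable 0
  simp only [ContinuousMap.coe_mk, zero_add, QuotientAddGroup.mk_zero, fourier_eval_zero,
    mul_one] at hP
  have hLHS : ∀ n : ℤ, h (n:ℝ) = (-1:ℂ)^n * g (Real.sqrt 2 * ((n:ℝ) + 3/4)) := by
    intro n
    rw [hh]
    simp only
    rw [epow]
  rw [htot.tsum_eq] at hP
  simp only [hLHS] at hP
  rw [← hSdef] at hP
  -- compute c1 + c2 = -1
  have hs2c : (Real.sqrt 2 : ℂ) * (Real.sqrt 2 : ℂ) = 2 := by
    rw [← Complex.ofReal_mul, hs2]; norm_num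
  have hc12 : c1 + c2 = -1 := by
    rw [hc1, hc2]
    have hcos : Real.cos (3*π/4) = -(Real.sqrt 2/2) := by
      rw [show (3*π/4 : ℝ) = π - π/4 by ring, Real.cos_pi_sub, Real.cos_pi_div_four]
    have hexp : Complex.exp (((-3*π/4 : ℝ) : ℂ) * I) + Complex.exp (((3*π/4 : ℝ) : ℂ) * I)
        = 2 * ((Real.cos (3*π/4) : ℝ) : ℂ) := by
      rw [Complex.exp_mul_I, Complex.exp_mul_I, Complex.ofReal_cos]
      rw [show ((-3*π/4 : ℝ) : ℂ) = -((3*π/4 : ℝ) : ℂ) by push_cast; ring]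
      rw [Complex.cos_neg, Complex.sin_neg]
      ring
    rw [← mul_add, hexp, hcos]
    push_cast
    rw [inv_mul_eq_iff_eq_mul₀ (by
      intro hzero
      rw [hzero] at hs2c
      simp at hs2c)]
    ring
  -- conclude
  have hfin : S = (c1 + c2) * S := by rw [add_mul]; exact hP
  rw [hc12] at hfin
  have h2S : (2:ℂ) * S = 0 := by linear_combination hfin
  rcases mul_eq_zero.1 h2S with hcontra | hS0
  · norm_num at hcontra
  · exact hS0
end

section
/- Let g : ℝ → ℂ be a continuous Wiener-space function with ĝ = −g. Then ∑_{k∈ℤ} (−1)^k g(√3·(k + 1/6)) = 0 and ∑_{k∈ℤ} (−1)^k g(√3·(k + 5/6)) = 0. -/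
open MeasureTheory Complex Real FourierTransform

noncomputable def Wsup (g : ℝ → ℂ) (k : ℤ) : ℝ := ⨆ x : Set.Icc (0:ℝ) 1, ‖g ((x : ℝ) + k)‖

lemma Wsup_nonneg (g : ℝ → ℂ) (k : ℤ) : 0 ≤ Wsup g k :=
  Real.iSup_nonneg (fun _ => norm_nonneg _)

lemma summable_Wsup {g : ℝ → ℂ} (hW : InWiener g) : Summable (Wsup g) := hW

lemma norm_le_Wsup {g : ℝ → ℂ} (hg : Continuous g) (y : ℝ) : ‖g y‖ ≤ Wsup g ⌊y⌋ := by
  have hbdd : BddAbove (Set.range fun x : Set.Icc (0:ℝ) 1 => ‖g ((x : ℝ) + ⌊y⌋)‖) := by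
    have : (Set.range fun x : Set.Icc (0:ℝ) 1 => ‖g ((x : ℝ) + ⌊y⌋)‖)
        = (fun x : ℝ => ‖g (x + ⌊y⌋)‖) '' (Set.Icc 0 1) := by
      rw [Set.image_eq_range]
    rw [this]
    exact (isCompact_Icc.image (by fun_prop)).bddAbove
  have hmem : Int.fract y ∈ Set.Icc (0:ℝ) 1 :=
    ⟨Int.fract_nonneg y, (Int.fract_lt_one y).le⟩
  have := le_ciSup hbdd (⟨Int.fract y, hmem⟩ : Set.Icc (0:ℝ) 1)
  simpa [Wsup, Int.fract_add_floor] using this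

lemma summable_norm_comp {g : ℝ → ℂ} (hg : Continuous g) (hW : InWiener g)
    (φ : ℤ → ℝ) (hφ : ∀ n, φ n + 1 ≤ φ (n + 1)) :
    Summable (fun n : ℤ => ‖g (φ n)‖) := by
  have hsm : StrictMono (fun n : ℤ => ⌊φ n⌋) := by
    apply strictMono_int_of_lt_succ
    intro n
    calc ⌊φ n⌋ < ⌊φ n⌋ + 1 := by omega
      _ = ⌊φ n + 1⌋ := by
          rw [show φ n + 1 = φ n + (1:ℤ) by push_cast; ring, Int.floor_add_intCast]
      _ ≤ ⌊φ (n + 1)⌋ := Int.floor_le_floor (hφ n)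
  exact Summable.of_nonneg_of_le (fun n => norm_nonneg _)
    (fun n => norm_le_Wsup hg (φ n))
    ((summable_Wsup hW).comp_injective hsm.injective)

lemma sqrt3_pos : (0:ℝ) < Real.sqrt 3 := Real.sqrt_pos.2 (by norm_num)

lemma one_le_sqrt3 : (1:ℝ) ≤ Real.sqrt 3 := by
  nlinarith [Real.sq_sqrt (by norm_num : (3:ℝ) ≥ 0), sqrt3_pos]

lemma sqrt3_le_two : Real.sqrt 3 ≤ 2 := by
  nlinarith [Real.sq_sqrt (by norm_num : (3:ℝ) ≥ 0), sqrt3_pos]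

lemma summable_shift {g : ℝ → ℂ} (hg : Continuous g) (hW : InWiener g) (c : ℝ) :
    Summable (fun n : ℤ => ‖g (Real.sqrt 3 * ((n : ℝ) + c))‖) := by
  apply summable_norm_comp hg hW
  intro n
  push_cast
  nlinarith [one_le_sqrt3]

/-- The equivalence `Fin 3 × ℤ ≃ ℤ`, `(r, j) ↦ 3 * j + r`. -/
def e3 : Fin 3 × ℤ ≃ ℤ where
  toFun p := 3 * p.2 + (p.1 : ℤ)
  invFun n := (⟨(n % 3).toNat, by omega⟩, n / 3)
  left_inv p := by
    obtain ⟨⟨r, hr⟩, j⟩ := p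
    have h1 : (3 * j + ((⟨r, hr⟩ : Fin 3) : ℤ)) % 3 = r := by simp; omega
    have h2 : (3 * j + ((⟨r, hr⟩ : Fin 3) : ℤ)) / 3 = j := by simp; omega
    simp only [Prod.mk.injEq, h1, h2]
    exact ⟨by ext; simp, trivial⟩
  right_inv n := by
    show 3 * (n / 3) + ((⟨(n % 3).toNat, by omega⟩ : Fin 3) : ℤ) = n
    simp only [Fin.val_mk]
    omega

lemma arg_identity (j : ℤ) (c : ℝ) :
    ((3 * j : ℤ) + c) / Real.sqrt 3 = Real.sqrt 3 * ((j : ℝ) + c / 3) := by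
  have h : Real.sqrt 3 ^ 2 = 3 := Real.sq_sqrt (by norm_num)
  rw [div_eq_iff sqrt3_pos.ne']
  push_cast
  linear_combination (-(j : ℝ) - c / 3) * h

lemma summable_dual {g : ℝ → ℂ} (hg : Continuous g) (hW : InWiener g) :
    Summable (fun n : ℤ => ‖g (((n : ℝ) + 1/2) / Real.sqrt 3)‖) := by
  rw [← Equiv.summable_iff e3]
  apply (summable_prod_of_nonneg (fun p => norm_nonneg _)).2
  refine ⟨fun r => ?_, Summable.of_finite⟩
  have harg : ∀ j : ℤ, (((e3 (r, j) : ℤ) : ℝ) + 1/2) / Real.sqrt 3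
      = Real.sqrt 3 * ((j : ℝ) + (((r : ℤ) : ℝ) + 1/2) / 3) := by
    intro j
    show ((((3 * j + (r : ℤ)) : ℤ) : ℝ) + 1/2) / Real.sqrt 3 = _
    rw [show (((3 * j + (r : ℤ)) : ℤ) : ℝ) + 1/2
        = ((3 * j : ℤ) : ℝ) + (((r : ℤ) : ℝ) + 1/2) by push_cast; ring]
    exact arg_identity j _
  simpa only [Function.comp_apply, harg] using
    summable_shift hg hW ((((r : ℤ) : ℝ) + 1/2) / 3)

lemma fourier_comp (g : ℝ → ℂ) (ξ : ℝ) :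
    𝓕 (fun t : ℝ => g (Real.sqrt 3 * t) * Complex.exp ((-π * t : ℝ) * Complex.I)) ξ
      = ((Real.sqrt 3)⁻¹ : ℝ) * 𝓕 g ((ξ + 1/2) / Real.sqrt 3) := by
  rw [Real.fourier_real_eq_integral_exp_smul,
    Real.fourier_real_eq_integral_exp_smul]
  have key : ∀ v : ℝ,
      Complex.exp ((-2 * π * v * ξ : ℝ) * Complex.I)
        • (g (Real.sqrt 3 * v) * Complex.exp ((-π * v : ℝ) * Complex.I))
      = (fun s : ℝ => Complex.exp ((-2 * π * (s / Real.sqrt 3) * (ξ + 1/2) : ℝ) * Complex.I)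
          • g s) (Real.sqrt 3 * v) := by
    intro v
    have hv : Real.sqrt 3 * v / Real.sqrt 3 = v := by
      field_simp
    simp only [hv, smul_eq_mul]
    rw [show ((-2 * π * v * (ξ + 1/2) : ℝ) : ℂ) * Complex.I
        = ((-2 * π * v * ξ : ℝ) : ℂ) * Complex.I + ((-π * v : ℝ) : ℂ) * Complex.I by
      push_cast; ring, Complex.exp_add]
    ring
  simp_rw [key]
  rw [MeasureTheory.Measure.integral_comp_mul_left
    (fun s : ℝ => Complex.exp ((-2 * π * (s / Real.sqrt 3) * (ξ + 1/2) : ℝ) * Complex.I) • g s)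
    (Real.sqrt 3)]
  rw [_root_.abs_of_nonneg (by positivity : (0:ℝ) ≤ (Real.sqrt 3)⁻¹)]
  rw [real_smul]
  congr 1
  apply MeasureTheory.integral_congr_ae
  filter_upwards with s
  have : (-2 * π * (s / Real.sqrt 3) * (ξ + 1/2) : ℝ)
      = -2 * π * s * ((ξ + 1/2) / Real.sqrt 3) := by ring
  rw [this]

lemma Wsup_eq_norm_restrict (g : ℝ → ℂ) (hg : Continuous g) (n : ℤ) :
    ‖((⟨g, hg⟩ : C(ℝ, ℂ)).comp (ContinuousMap.addRight (n : ℝ))).restrict (Set.Icc 0 1)‖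
      = Wsup g n := by
  rw [ContinuousMap.norm_eq_iSup_norm]
  rfl

lemma integrable_of_wiener_s8 {g : ℝ → ℂ} (hg : Continuous g) (hW : InWiener g) :
    Integrable g := by
  have := Real.integrable_of_summable_norm_Icc (f := (⟨g, hg⟩ : C(ℝ, ℂ)))
    (by simpa only [Wsup_eq_norm_restrict g hg] using summable_Wsup hW)
  exact this

lemma even_of_eigen {g : ℝ → ℂ} (hg : Continuous g) (hW : InWiener g)
    (heig : ∀ γ : ℝ, 𝓕 g γ = -g γ) (x : ℝ) : g (-x) = g x := by
  have hInt : Integrable g := integrable_of_wiener_s8 hg hW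
  have h𝓕 : 𝓕 g = fun γ => -g γ := funext heig
  have hInt2 : Integrable (𝓕 g) := by rw [h𝓕]; exact hInt.neg
  have hinv := hg.fourierInv_fourier_eq hInt hInt2
  have hneg : ∀ w : ℝ, 𝓕 (fun y : ℝ => -g y) w = -𝓕 g w := by
    intro w
    rw [Real.fourier_real_eq, Real.fourier_real_eq, ← integral_neg]
    simp [smul_neg]
  have : g x = g (-x) := by
    conv_lhs => rw [← hinv]
    rw [Real.fourierInv_eq_fourier_neg, h𝓕, hneg, heig, neg_neg]
  exact this.symm

lemma summable_norm_restrict {g : ℝ → ℂ} (hg : Continuous g) (hW : InWiener g)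
    (fC : C(ℝ, ℂ)) (hfC : ∀ t : ℝ, ‖fC t‖ = ‖g (Real.sqrt 3 * t)‖)
    (K : TopologicalSpace.Compacts ℝ) :
    Summable fun n : ℤ => ‖(fC.comp (ContinuousMap.addRight (n : ℝ))).restrict K‖ := by
  obtain ⟨r, hr⟩ := K.isCompact.isBounded.subset_closedBall 0
  set R : ℕ := ⌈r⌉₊ with hR
  have hK : (K : Set ℝ) ⊆ Set.Icc (-(R : ℝ)) R := by
    intro x hx
    have := hr hx
    rw [Metric.mem_closedBall, Real.dist_eq, sub_zero] at this
    have hrR : r ≤ (R : ℝ) := Nat.le_ceil r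
    constructor <;> [linarith [abs_le.1 (this.trans hrR)]; exact (abs_le.1 (this.trans hrR)).2]
  set lo : ℤ → ℤ := fun n => ⌊Real.sqrt 3 * ((n : ℝ) - R)⌋ with hlo
  set T : ℤ → ℝ := fun n => ∑ i ∈ Finset.range (4 * R + 2), Wsup g (lo n + i) with hT
  have hT0 : ∀ n, 0 ≤ T n := fun n => Finset.sum_nonneg fun i _ => Wsup_nonneg g _
  have hbound : ∀ n : ℤ, ‖(fC.comp (ContinuousMap.addRight (n : ℝ))).restrict K‖ ≤ T n := by
    intro n
    rw [ContinuousMap.norm_le _ (hT0 n)]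
    rintro ⟨x, hx⟩
    have hx' := hK hx
    simp only [ContinuousMap.restrict_apply, ContinuousMap.comp_apply,
      ContinuousMap.coe_addRight]
    rw [hfC]
    set m : ℤ := ⌊Real.sqrt 3 * (x + n)⌋ with hm
    have h1 : lo n ≤ m := by
      apply Int.floor_le_floor
      have := hx'.1
      nlinarith [sqrt3_pos]
    have h2 : m ≤ lo n + (4 * R : ℤ) := by
      have : Real.sqrt 3 * (x + n) ≤ Real.sqrt 3 * ((n : ℝ) - R) + (4 * R : ℤ) := by
        push_cast
        nlinarith [sqrt3_le_two, sqrt3_pos, hx'.1, hx'.2, Nat.cast_nonneg (α := ℝ) R]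
      calc m ≤ ⌊Real.sqrt 3 * ((n : ℝ) - R) + (4 * R : ℤ)⌋ := Int.floor_le_floor this
        _ = lo n + (4 * R : ℤ) := by rw [Int.floor_add_intCast]
    have step1 : ‖g (Real.sqrt 3 * (x + n))‖ ≤ Wsup g m := norm_le_Wsup hg _
    have step2 : Wsup g m ≤ T n := by
      have hmem : (m - lo n).toNat ∈ Finset.range (4 * R + 2) := by
        rw [Finset.mem_range]; omega
      have : Wsup g (lo n + ((m - lo n).toNat : ℤ)) ≤ T n :=
        Finset.single_le_sum (f := fun i : ℕ => Wsup g (lo n + i))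
          (fun i _ => Wsup_nonneg g _) hmem
      rwa [show (lo n + ((m - lo n).toNat : ℤ)) = m by omega] at this
    exact step1.trans step2
  have hsm : StrictMono lo := by
    apply strictMono_int_of_lt_succ
    intro n
    have : Real.sqrt 3 * ((n : ℝ) - R) + 1 ≤ Real.sqrt 3 * (((n + 1 : ℤ) : ℝ) - R) := by
      push_cast
      nlinarith [one_le_sqrt3]
    have h1 : ((⌊Real.sqrt 3 * ((n : ℝ) - R)⌋ : ℤ) : ℝ) ≤ Real.sqrt 3 * ((n : ℝ) - R) :=
      Int.floor_le _
    rw [Int.lt_iff_add_one_le, hlo]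
    rw [Int.le_floor]
    push_cast at this h1 ⊢
    linarith
  have hTsum : Summable T := by
    apply summable_sum
    intro i _
    have hinj : Function.Injective (fun n : ℤ => lo n + (i : ℤ)) := by
      intro a b hab
      simp only [add_left_inj] at hab
      exact hsm.injective hab
    exact (summable_Wsup hW).comp_injective hinj
  exact Summable.of_nonneg_of_le (fun n => norm_nonneg _) hbound hTsum

lemma he3 (p : Fin 3 × ℤ) : (e3 p : ℤ) = 3 * p.2 + (p.1 : ℤ) := rfl

lemma exp_neg_pi_I : Complex.exp (-(↑π * Complex.I)) = -1 := by
  rw [Complex.exp_neg, Complex.exp_pi_mul_I]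
  norm_num

lemma zpow_neg_one_sub (k : ℤ) : ((-1 : ℂ)) ^ (-1 - k) = -((-1 : ℂ)) ^ k := by
  have h0 : (-1 : ℂ) ≠ 0 := by norm_num
  have key : ((-1 : ℂ)) ^ k * ((-1 : ℂ)) ^ k = 1 := by
    rw [← zpow_add₀ h0, show k + k = 2 * k by ring, zpow_mul]
    norm_num
  rw [zpow_sub₀ h0, div_eq_iff (zpow_ne_zero k h0)]
  rw [show -((-1 : ℂ)) ^ k * (-1 : ℂ) ^ k = -(((-1 : ℂ)) ^ k * ((-1 : ℂ)) ^ k) by ring, key]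
  norm_num

lemma exp_pi_int_mul (j : ℤ) : Complex.exp ((j : ℂ) * (↑π * Complex.I)) = ((-1 : ℂ)) ^ j := by
  rw [Complex.exp_int_mul, Complex.exp_pi_mul_I]

lemma reflect_sum {g : ℝ → ℂ} (hg : Continuous g) (hW : InWiener g)
    (heig : ∀ γ : ℝ, 𝓕 g γ = -g γ) (d : ℝ) :
    (∑' k : ℤ, (-1 : ℂ) ^ k * g (Real.sqrt 3 * ((k : ℝ) + d)))
      = -∑' k : ℤ, (-1 : ℂ) ^ k * g (Real.sqrt 3 * ((k : ℝ) + (1 - d))) := by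
  have heven := even_of_eigen hg hW heig
  have hre := Equiv.tsum_eq (Equiv.subLeft (-1 : ℤ))
    (fun k : ℤ => (-1 : ℂ) ^ k * g (Real.sqrt 3 * ((k : ℝ) + d)))
  rw [← hre, ← tsum_neg]
  congr 1
  funext k
  rw [Equiv.subLeft_apply]
  rw [zpow_neg_one_sub k]
  rw [show Real.sqrt 3 * (((-1 - k : ℤ) : ℝ) + d)
      = -(Real.sqrt 3 * ((k : ℝ) + (1 - d))) by push_cast; ring]
  rw [heven]
  ring

lemma zpow_neg_one_neg (k : ℤ) : ((-1 : ℂ)) ^ (-k) = ((-1 : ℂ)) ^ k := by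
  have key : ((-1 : ℂ)) ^ k * ((-1 : ℂ)) ^ k = 1 := by
    rw [← zpow_add₀ (by norm_num : (-1:ℂ) ≠ 0), show k + k = 2 * k by ring, zpow_mul]
    norm_num
  rw [zpow_neg]
  exact inv_eq_of_mul_eq_one_left key

lemma phase_eval (j r : ℤ) :
    Complex.exp ((((π * ((3 * j + r : ℤ) : ℝ) / 3 : ℝ)) : ℂ) * Complex.I)
      = ((-1 : ℂ)) ^ j * Complex.exp (((π * (r : ℝ) / 3 : ℝ) : ℂ) * Complex.I) := by
  rw [show (((π * ((3 * j + r : ℤ) : ℝ) / 3 : ℝ)) : ℂ) * Complex.I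
      = (j : ℂ) * ((π : ℂ) * Complex.I) + ((π * (r : ℝ) / 3 : ℝ) : ℂ) * Complex.I by
    push_cast; ring, Complex.exp_add, exp_pi_int_mul]

lemma exp_neg_pi_div_six :
    Complex.exp (((-(π/6) : ℝ) : ℂ) * Complex.I)
      = (Real.sqrt 3 : ℂ) / 2 - Complex.I / 2 := by
  rw [Complex.exp_mul_I, ← Complex.ofReal_cos, ← Complex.ofReal_sin,
    Real.cos_neg, Real.sin_neg, Real.cos_pi_div_six, Real.sin_pi_div_six]
  push_cast; ring

lemma exp_two_pi_div_three :
    Complex.exp (((π * (2:ℝ) / 3 : ℝ) : ℂ) * Complex.I)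
      = -1/2 + ((Real.sqrt 3 : ℂ) / 2) * Complex.I := by
  rw [Complex.exp_mul_I, ← Complex.ofReal_cos, ← Complex.ofReal_sin,
    show (π * (2:ℝ) / 3 : ℝ) = π - π/3 by ring, Real.cos_pi_sub, Real.sin_pi_sub,
    Real.cos_pi_div_three, Real.sin_pi_div_three]
  push_cast; ring

theorem sum_eigen_neg_one_sqrt_three (g : ℝ → ℂ) (hg : Continuous g) (hW : InWiener g)
    (heig : ∀ γ : ℝ, 𝓕 g γ = -g γ) :
    (∑' k : ℤ, (-1 : ℂ) ^ k * g (Real.sqrt 3 * ((k : ℝ) + 1/6)) = 0) ∧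
    (∑' k : ℤ, (-1 : ℂ) ^ k * g (Real.sqrt 3 * ((k : ℝ) + 5/6)) = 0) := by
  -- symmetry consequences
  have hb0 : (∑' k : ℤ, (-1 : ℂ) ^ k * g (Real.sqrt 3 * ((k : ℝ) + 1/2))) = 0 := by
    have h := reflect_sum hg hW heig (1/2)
    norm_num at h
    have h2 : (2 : ℂ) * (∑' k : ℤ, (-1 : ℂ) ^ k * g (Real.sqrt 3 * ((k : ℝ) + 1/2))) = 0 := by
      linear_combination h
    exact (mul_eq_zero.1 h2).resolve_left (by norm_num)
  have hca : (∑' k : ℤ, (-1 : ℂ) ^ k * g (Real.sqrt 3 * ((k : ℝ) + 5/6)))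
      = -(∑' k : ℤ, (-1 : ℂ) ^ k * g (Real.sqrt 3 * ((k : ℝ) + 1/6))) := by
    have h := reflect_sum hg hW heig (5/6)
    norm_num at h
    exact h
  suffices ha0 : (∑' k : ℤ, (-1 : ℂ) ^ k * g (Real.sqrt 3 * ((k : ℝ) + 1/6))) = 0 by
    exact ⟨ha0, by rw [hca, ha0, neg_zero]⟩
  -- Poisson summation setup
  have hcont : Continuous (fun t : ℝ =>
      g (Real.sqrt 3 * t) * Complex.exp (((-π * t : ℝ) : ℂ) * Complex.I)) := by
    fun_prop
  set fC : C(ℝ, ℂ) := ⟨fun t : ℝ =>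
      g (Real.sqrt 3 * t) * Complex.exp (((-π * t : ℝ) : ℂ) * Complex.I), hcont⟩ with hfCdef
  have h_norm : ∀ K : TopologicalSpace.Compacts ℝ,
      Summable fun n : ℤ => ‖(fC.comp (ContinuousMap.addRight (n : ℝ))).restrict K‖ := by
    apply summable_norm_restrict hg hW
    intro t
    simp [hfCdef, Complex.norm_exp]
  have h𝓕 : ∀ ξ : ℝ, 𝓕 ⇑fC ξ
      = (((Real.sqrt 3)⁻¹ : ℝ) : ℂ) * 𝓕 g ((ξ + 1/2) / Real.sqrt 3) := fun ξ =>
    fourier_comp g ξ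
  have h_sum : Summable (fun n : ℤ => 𝓕 ⇑fC n) := by
    apply Summable.of_norm
    have hn : ∀ n : ℤ, ‖𝓕 ⇑fC n‖
        = (Real.sqrt 3)⁻¹ * ‖g (((n : ℝ) + 1/2) / Real.sqrt 3)‖ := by
      intro n
      rw [h𝓕, heig, norm_mul, norm_neg, Complex.norm_real, Real.norm_eq_abs,
        _root_.abs_of_nonneg (by positivity : (0:ℝ) ≤ (Real.sqrt 3)⁻¹)]
    simp only [hn]
    exact (summable_dual hg hW).mul_left _
  have hpois := Real.tsum_eq_tsum_fourier h_norm h_sum (1/6 : ℝ)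
  -- rewrite the left-hand side
  have hE : ∀ n : ℤ, fC ((1/6 : ℝ) + n)
      = Complex.exp (((-(π/6) : ℝ) : ℂ) * Complex.I)
        * ((-1 : ℂ) ^ n * g (Real.sqrt 3 * ((n : ℝ) + 1/6))) := by
    intro n
    show g (Real.sqrt 3 * ((1/6 : ℝ) + n))
        * Complex.exp (((-π * ((1/6 : ℝ) + n) : ℝ) : ℂ) * Complex.I) = _
    rw [show ((-π * ((1/6 : ℝ) + (n : ℝ)) : ℝ) : ℂ) * Complex.I
        = ((-(π/6) : ℝ) : ℂ) * Complex.I + ((-n : ℤ) : ℂ) * ((π : ℂ) * Complex.I) by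
      push_cast; ring]
    rw [Complex.exp_add, exp_pi_int_mul, zpow_neg_one_neg]
    rw [show Real.sqrt 3 * ((1/6 : ℝ) + n) = Real.sqrt 3 * ((n : ℝ) + 1/6) by ring]
    ring
  simp only [hE] at hpois
  rw [tsum_mul_left] at hpois
  -- rewrite the right-hand side
  set u : ℤ → ℂ := fun n => (((Real.sqrt 3)⁻¹ : ℝ) : ℂ)
    * -g (((n : ℝ) + 1/2) / Real.sqrt 3)
    * Complex.exp (((π * (n : ℝ) / 3 : ℝ) : ℂ) * Complex.I) with hu_def
  have hR : ∀ n : ℤ, 𝓕 ⇑fC n * fourier n ((1/6 : ℝ) : UnitAddCircle) = u n := by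
    intro n
    rw [h𝓕, heig, fourier_coe_apply, hu_def]
    congr 1
    congr 1
    push_cast
    ring
  simp only [hR] at hpois
  -- summability of u
  have hu_sum : Summable u := by
    apply Summable.of_norm
    have hn : ∀ n : ℤ, ‖u n‖ = (Real.sqrt 3)⁻¹ * ‖g (((n : ℝ) + 1/2) / Real.sqrt 3)‖ := by
      intro n
      rw [hu_def]
      simp only [norm_mul, norm_neg, Complex.norm_exp_ofReal_mul_I, mul_one,
        Complex.norm_real, Real.norm_eq_abs,
        _root_.abs_of_nonneg (by positivity : (0:ℝ) ≤ (Real.sqrt 3)⁻¹)]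
    simp only [hn]
    exact (summable_dual hg hW).mul_left _
  -- split the sum over residues mod 3
  rw [← Equiv.tsum_eq e3 u] at hpois
  have hcomp : Summable (fun p : Fin 3 × ℤ => u (e3 p)) := by
    have h' := (Equiv.summable_iff e3).2 hu_sum
    exact h'
  rw [Summable.tsum_prod' hcomp hcomp.prod_factor] at hpois
  rw [tsum_fintype (fun b : Fin 3 => ∑' c : ℤ, u (e3 (b, c)))] at hpois
  rw [Fin.sum_univ_three] at hpois
  -- evaluate the three slices
  have hslice : ∀ (r : Fin 3) (dr : ℝ), ((((r : ℤ)) : ℝ) + 1/2)/3 = dr → ∀ j : ℤ,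
      u (e3 (r, j)) = (-((((Real.sqrt 3)⁻¹ : ℝ)) : ℂ)
          * Complex.exp (((π * (((r : ℤ)) : ℝ) / 3 : ℝ) : ℂ) * Complex.I))
        * ((-1 : ℂ) ^ j * g (Real.sqrt 3 * ((j : ℝ) + dr))) := by
    intro r dr hdr j
    rw [← hdr]
    simp only [hu_def]
    rw [he3 (r, j)]
    have harg : ((((3 * j + (r : ℤ) : ℤ)) : ℝ) + 1/2) / Real.sqrt 3
        = Real.sqrt 3 * ((j : ℝ) + ((((r : ℤ)) : ℝ) + 1/2)/3) := by
      rw [show ((((3 * j + (r : ℤ) : ℤ)) : ℝ) + 1/2)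
          = (((3 * j : ℤ)) : ℝ) + ((((r : ℤ)) : ℝ) + 1/2) by push_cast; ring]
      exact arg_identity j _
    rw [harg, phase_eval j (r : ℤ)]
    ring
  have e0 : (∑' c : ℤ, u (e3 ((0 : Fin 3), c)))
      = (-((((Real.sqrt 3)⁻¹ : ℝ)) : ℂ)
          * Complex.exp (((π * ((((0 : Fin 3) : ℤ)) : ℝ) / 3 : ℝ) : ℂ) * Complex.I))
        * ∑' k : ℤ, (-1 : ℂ) ^ k * g (Real.sqrt 3 * ((k : ℝ) + 1/6)) := by
    rw [tsum_congr (hslice 0 (1/6) (by norm_num)), tsum_mul_left]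
  have e1 : (∑' c : ℤ, u (e3 ((1 : Fin 3), c)))
      = (-((((Real.sqrt 3)⁻¹ : ℝ)) : ℂ)
          * Complex.exp (((π * ((((1 : Fin 3) : ℤ)) : ℝ) / 3 : ℝ) : ℂ) * Complex.I))
        * ∑' k : ℤ, (-1 : ℂ) ^ k * g (Real.sqrt 3 * ((k : ℝ) + 1/2)) := by
    rw [tsum_congr (hslice 1 (1/2) (by norm_num)), tsum_mul_left]
  have e2 : (∑' c : ℤ, u (e3 ((2 : Fin 3), c)))
      = (-((((Real.sqrt 3)⁻¹ : ℝ)) : ℂ)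
          * Complex.exp (((π * ((((2 : Fin 3) : ℤ)) : ℝ) / 3 : ℝ) : ℂ) * Complex.I))
        * ∑' k : ℤ, (-1 : ℂ) ^ k * g (Real.sqrt 3 * ((k : ℝ) + 5/6)) := by
    rw [tsum_congr (hslice 2 (5/6) (by norm_num)), tsum_mul_left]
  rw [e0, e1, e2, hb0, hca, mul_zero] at hpois
  -- numeric phase values
  have p0 : Complex.exp (((π * ((((0 : Fin 3) : ℤ)) : ℝ) / 3 : ℝ) : ℂ) * Complex.I) = 1 := by
    norm_num [Complex.exp_zero]
  have p2 : Complex.exp (((π * ((((2 : Fin 3) : ℤ)) : ℝ) / 3 : ℝ) : ℂ) * Complex.I)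
      = -1/2 + ((Real.sqrt 3 : ℂ) / 2) * Complex.I := by
    rw [show (π * ((((2 : Fin 3) : ℤ)) : ℝ) / 3 : ℝ) = π * (2 : ℝ) / 3 by norm_num]
    exact exp_two_pi_div_three
  rw [p0, p2, exp_neg_pi_div_six] at hpois
  -- final algebra
  set a := ∑' k : ℤ, (-1 : ℂ) ^ k * g (Real.sqrt 3 * ((k : ℝ) + 1/6)) with ha_def
  have ht : ((Real.sqrt 3 : ℝ) : ℂ) * ((Real.sqrt 3 : ℝ) : ℂ) = 3 := by
    rw [← Complex.ofReal_mul, Real.mul_self_sqrt (by norm_num)]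
    norm_num
  have ht0 : ((Real.sqrt 3 : ℝ) : ℂ) ≠ 0 := by
    simpa using sqrt3_pos.ne'
  have hfactor : (((Real.sqrt 3 : ℝ) : ℂ) - Complex.I) * a = 0 := by
    have h' := hpois
    rw [Complex.ofReal_inv] at h'
    field_simp at h'
    linear_combination (((Real.sqrt 3 : ℝ) : ℂ) / 6) * h' + (-((Real.sqrt 3 : ℝ) : ℂ) * a / 6 + Complex.I * a / 3) * ht
  rcases mul_eq_zero.1 hfactor with h | h
  · exfalso
    have := congrArg Complex.im h
    simp [Complex.sub_im, Complex.ofReal_im, Complex.I_im] at this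
  · exact h
end

section
/- The Hermite function h_n(x) = c_n^{−1/2} e^{πx²} (d/dx)^n e^{−2πx²}, with c_n = (2π)^n 2^{n−1/2} n!, is an eigenfunction of the Fourier transform: ĥ_n(γ) = (−i)^n h_n(γ) for all γ ∈ ℝ. -/
open MeasureTheory Complex Real FourierTransform

/-- The `n`-th Hermite function `h_n(x) = c_n^{-1/2} e^{π x²} (d/dx)^n e^{-2π x²}`
with `c_n = (2π)^n 2^{n-1/2} n!`. -/
noncomputable def hermiteFun (n : ℕ) (x : ℝ) : ℝ :=
  ((2 * Real.pi) ^ n * (2:ℝ) ^ ((n : ℝ) - 1/2) * (n.factorial : ℝ)) ^ (-(1/2 : ℝ)) *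
    Real.exp (Real.pi * x ^ 2) * iteratedDeriv n (fun t => Real.exp (-2 * Real.pi * t ^ 2)) x

noncomputable def hermP : ℕ → Polynomial ℝ
  | 0 => 1
  | n+1 => Polynomial.derivative (hermP n) - Polynomial.C (4*Real.pi) * Polynomial.X * hermP n

lemma gauss_hasDerivAt (x : ℝ) :
    HasDerivAt (fun t : ℝ => Real.exp (-2 * Real.pi * t ^ 2))
      (-4 * Real.pi * x * Real.exp (-2 * Real.pi * x ^ 2)) x := by
  have h1 : HasDerivAt (fun t : ℝ => -2 * Real.pi * t ^ 2) (-4 * Real.pi * x) x := by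
    have h : HasDerivAt (fun t : ℝ => -2 * Real.pi * t ^ 2) _ x :=
      (hasDerivAt_pow 2 x).const_mul (-2 * Real.pi)
    convert h using 1
    ring
  have := h1.exp
  convert this using 1
  ring

lemma iteratedDeriv_gauss (n : ℕ) (x : ℝ) :
    iteratedDeriv n (fun t => Real.exp (-2 * Real.pi * t ^ 2)) x
      = (hermP n).eval x * Real.exp (-2 * Real.pi * x ^ 2) := by
  induction n generalizing x with
  | zero => simp [hermP]
  | succ n ih =>
    rw [iteratedDeriv_succ]
    have hfe : iteratedDeriv n (fun t => Real.exp (-2 * Real.pi * t ^ 2))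
        = fun t => (hermP n).eval t * Real.exp (-2 * Real.pi * t ^ 2) := funext ih
    rw [hfe]
    have h : HasDerivAt (fun t => (hermP n).eval t * Real.exp (-2 * Real.pi * t ^ 2)) _ x :=
      ((hermP n).hasDerivAt x).mul (gauss_hasDerivAt x)
    rw [h.deriv]
    simp [hermP]
    ring

noncomputable def Ffun (n : ℕ) (x : ℝ) : ℝ := (hermP n).eval x * Real.exp (-Real.pi * x ^ 2)

lemma gaussPi_hasDerivAt (x : ℝ) :
    HasDerivAt (fun t : ℝ => Real.exp (-Real.pi * t ^ 2))
      (-2 * Real.pi * x * Real.exp (-Real.pi * x ^ 2)) x := by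
  have h1 : HasDerivAt (fun t : ℝ => -Real.pi * t ^ 2) (-2 * Real.pi * x) x := by
    have h : HasDerivAt (fun t : ℝ => -Real.pi * t ^ 2) _ x :=
      (hasDerivAt_pow 2 x).const_mul (-Real.pi)
    convert h using 1
    ring
  have := h1.exp
  convert this using 1
  ring

lemma Ffun_hasDerivAt (n : ℕ) (x : ℝ) :
    HasDerivAt (Ffun n)
      ((Polynomial.derivative (hermP n)).eval x * Real.exp (-Real.pi * x ^ 2)
        - 2 * Real.pi * x * Ffun n x) x := by
  have h : HasDerivAt (Ffun n) _ x := ((hermP n).hasDerivAt x).mul (gaussPi_hasDerivAt x)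
  convert h using 1
  simp [Ffun]
  ring

lemma Ffun_succ (n : ℕ) (x : ℝ) :
    Ffun (n+1) x = deriv (Ffun n) x - 2 * Real.pi * x * Ffun n x := by
  rw [(Ffun_hasDerivAt n x).deriv]
  simp [Ffun, hermP]
  ring

lemma hermiteFun_eq (n : ℕ) (x : ℝ) :
    hermiteFun n x
      = ((2 * Real.pi) ^ n * (2:ℝ) ^ ((n : ℝ) - 1/2) * (n.factorial : ℝ)) ^ (-(1/2 : ℝ))
        * Ffun n x := by
  rw [hermiteFun, iteratedDeriv_gauss, Ffun, mul_assoc, mul_assoc]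
  congr 1
  rw [mul_comm ((hermP n).eval x), ← mul_assoc, ← Real.exp_add]
  ring_nf

lemma int_pow_gauss (n : ℕ) :
    Integrable fun x : ℝ => x ^ n * Real.exp (-Real.pi * x ^ 2) := by
  have h := integrable_rpow_mul_exp_neg_mul_sq Real.pi_pos
    (s := (n : ℝ)) (lt_of_lt_of_le neg_one_lt_zero (Nat.cast_nonneg n))
  simpa [Real.rpow_natCast] using h

lemma int_poly_gauss (Q : Polynomial ℝ) :
    Integrable fun x : ℝ => Q.eval x * Real.exp (-Real.pi * x ^ 2) := by
  have he : ∀ x : ℝ, Q.eval x * Real.exp (-Real.pi * x ^ 2)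
      = ∑ i ∈ Finset.range (Q.natDegree + 1),
          Q.coeff i * (x ^ i * Real.exp (-Real.pi * x ^ 2)) := by
    intro x
    rw [Polynomial.eval_eq_sum_range, Finset.sum_mul]
    simp [mul_assoc]
  simp_rw [he]
  exact integrable_finset_sum _ fun i _ => (int_pow_gauss i).const_mul _

lemma ft_sub {f g : ℝ → ℂ} (hf : Integrable f) (hg : Integrable g) (γ : ℝ) :
    𝓕 (fun x => f x - g x) γ = 𝓕 f γ - 𝓕 g γ := by
  simp_rw [Real.fourier_eq, smul_sub]
  exact integral_sub ((Real.fourierIntegral_convergent_iff γ).2 hf)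
    ((Real.fourierIntegral_convergent_iff γ).2 hg)

lemma ft_const_mul (c : ℂ) (f : ℝ → ℂ) (γ : ℝ) :
    𝓕 (fun x => c * f x) γ = c * 𝓕 f γ := by
  simp_rw [Real.fourier_real_eq]
  rw [← integral_const_mul]
  congr 1
  funext x
  simp only [Circle.smul_def, smul_eq_mul]
  ring

noncomputable def cF (n : ℕ) (x : ℝ) : ℂ := (Ffun n x : ℂ)

lemma cF_integrable (n : ℕ) : Integrable (cF n) := by
  have h := Integrable.ofReal (𝕜 := ℂ) (int_poly_gauss (hermP n))
  exact h

lemma cF_x_integrable (n : ℕ) : Integrable fun x : ℝ => x • cF n x := by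
  have h := Integrable.ofReal (𝕜 := ℂ) (int_poly_gauss (Polynomial.X * hermP n))
  refine h.congr (Filter.Eventually.of_forall fun x => ?_)
  simp only [cF]
  rw [real_smul, ← Complex.ofReal_mul]
  exact congrArg Complex.ofReal
    (by simp only [Polynomial.eval_mul, Polynomial.eval_X, Ffun]; ring_nf; simp)

lemma cF_hasDerivAt (n : ℕ) (x : ℝ) :
    HasDerivAt (cF n) (((deriv (Ffun n) x : ℝ) : ℂ)) x := by
  rw [(Ffun_hasDerivAt n x).deriv]
  exact (Ffun_hasDerivAt n x).ofReal_comp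

lemma cF_diff (n : ℕ) : Differentiable ℝ (cF n) :=
  fun x => (cF_hasDerivAt n x).differentiableAt

lemma cF_deriv (n : ℕ) : deriv (cF n) = fun x => ((deriv (Ffun n) x : ℝ) : ℂ) :=
  funext fun x => (cF_hasDerivAt n x).deriv

lemma deriv_Ffun (n : ℕ) (x : ℝ) :
    deriv (Ffun n) x
      = (Polynomial.derivative (hermP n)
          - Polynomial.C (2*Real.pi) * Polynomial.X * hermP n).eval x
        * Real.exp (-Real.pi * x ^ 2) := by
  rw [(Ffun_hasDerivAt n x).deriv]
  simp [Ffun]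
  ring

lemma cF_deriv_integrable (n : ℕ) : Integrable (deriv (cF n)) := by
  rw [cF_deriv]
  simp_rw [deriv_Ffun]
  exact Integrable.ofReal (𝕜 := ℂ)
    (int_poly_gauss (Polynomial.derivative (hermP n)
      - Polynomial.C (2*Real.pi) * Polynomial.X * hermP n))

lemma cF_succ (n : ℕ) :
    cF (n+1) = fun x : ℝ => deriv (cF n) x - (2*Real.pi : ℂ) * (x • cF n x) := by
  funext x
  rw [cF_deriv]
  simp only [cF, real_smul]
  rw [Ffun_succ]
  push_cast
  ring

lemma keyFT : ∀ n : ℕ, 𝓕 (cF n) = fun γ : ℝ => (-Complex.I) ^ n * cF n γ := by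
  intro n
  induction n with
  | zero =>
    have h := fourier_gaussian_pi (b := 1) (by norm_num)
    have hc : cF 0 = fun x : ℝ => Complex.exp (-(Real.pi:ℂ) * 1 * (x:ℂ) ^ 2) := by
      funext x
      simp only [cF, Ffun, hermP, Polynomial.eval_one, one_mul, Complex.ofReal_exp]
      push_cast
      ring_nf
    rw [hc, h]
    funext γ
    simp
  | succ n ih =>
    have hf := cF_integrable n
    have hxf := cF_x_integrable n
    have hdf := cF_diff n
    have hdi := cF_deriv_integrable n
    funext γ
    have h1 : 𝓕 (deriv (cF n)) γ = (2 * Real.pi * Complex.I * γ) • 𝓕 (cF n) γ := by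
      rw [Real.fourier_deriv hf hdf hdi]
    have h2 : deriv (𝓕 (cF n)) γ
        = 𝓕 (fun x : ℝ => ((-2 : ℂ) * Real.pi * Complex.I * x) • cF n x) γ := by
      rw [Real.deriv_fourier hf hxf]
    have h3 : (fun x : ℝ => ((-2 : ℂ) * Real.pi * Complex.I * x) • cF n x)
        = fun x : ℝ => ((-2 : ℂ) * Real.pi * Complex.I) * (x • cF n x) := by
      funext x
      simp only [smul_eq_mul, real_smul]
      ring
    have h4 : deriv (𝓕 (cF n)) γ
        = ((-2 : ℂ) * Real.pi * Complex.I) * 𝓕 (fun x : ℝ => x • cF n x) γ := by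
      rw [h2, h3, ft_const_mul]
    have h5 : deriv (𝓕 (cF n)) γ = (-Complex.I) ^ n * deriv (cF n) γ := by
      rw [ih]
      exact deriv_const_mul _ (hdf γ)
    have hG : (2 * Real.pi : ℂ) * 𝓕 (fun x : ℝ => x • cF n x) γ
        = Complex.I * ((-Complex.I) ^ n * deriv (cF n) γ) := by
      rw [← h5, h4]
      linear_combination (2 * (Real.pi:ℂ) * 𝓕 (fun x : ℝ => x • cF n x) γ) * Complex.I_sq
    rw [cF_succ]
    rw [ft_sub hdi (hxf.const_mul _) γ, ft_const_mul, h1, ih]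
    simp only [smul_eq_mul, real_smul] at hG ⊢
    linear_combination -hG

theorem hermite_fourier_eigen (n : ℕ) :
    ∀ γ : ℝ, 𝓕 (fun x : ℝ => (hermiteFun n x : ℂ)) γ = (-Complex.I) ^ n * (hermiteFun n γ : ℂ) := by
  intro γ
  set c : ℝ := ((2 * Real.pi) ^ n * (2:ℝ) ^ ((n : ℝ) - 1/2) * (n.factorial : ℝ)) ^ (-(1/2 : ℝ))
    with hc
  have hfun : (fun x : ℝ => (hermiteFun n x : ℂ)) = fun x : ℝ => (c : ℂ) * cF n x := by
    funext x
    rw [hermiteFun_eq]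
    push_cast [cF]
    ring
  rw [hfun, ft_const_mul, keyFT n, hermiteFun_eq]
  push_cast [cF]
  ring
end
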